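/- In the N-layer cascade network, let 1 ≤ n ≤ N and let ℳ = ∏_{j=1}^M z_j be a monomial appearing in s_{n−1,L_{n−1}}^{(ℓ_0)} but in no lower-order derivative of s_{n−1,L_{n−1}}, involving only variables of species among {S_{k,j}, F_k : 1 ≤ k ≤ n−1} ∪ {E}. Assume that (i) ℳ is square-free and does not contain two disjoint pairs of variables corresponding to species that react together, and (ii) if s_{n−1,L_{n−1}} divides ℳ, then for every pair of indices j_1, j_2 with Z_{j_1} reacting with Z_{j_2}, one of Z_{j_1}, Z_{j_2} equals S_{n−1,L_{n−1}}. Then ℳ̂ := s_{n,L_n−1}·ℳ appears in s_{n,L_n}^{(ℓ_0+2)} and in no lower-order derivative of s_{n,L_n}; moreover, if C is the coefficient of ℳ in s_{n−1,L_{n−1}}^{(ℓ_0)}, then the coefficient of ℳ̂ in s_{n,L_n}^{(ℓ_0+2)} equals c_{n,L_n} a_{n,L_n} C. -/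

import Mathlib

open MvPolynomial Finsupp

variable {σ : Type*}

/-- The total (Lie) derivative of a polynomial `φ` associated to the polynomial vector
field `f`: `φ̇ = Σ_x (∂φ/∂x)·f x`. -/
noncomputable def lieD [Fintype σ] (f : σ → MvPolynomial σ ℝ)
    (φ : MvPolynomial σ ℝ) : MvPolynomial σ ℝ :=
  ∑ x : σ, MvPolynomial.pderiv x φ * f x

/-- Iterated total (Lie) derivative. -/
noncomputable def lieDIter [Fintype σ] (f : σ → MvPolynomial σ ℝ) :
    ℕ → MvPolynomial σ ℝ → MvPolynomial σ ℝ
  | 0, φ => φ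
  | n + 1, φ => lieD f (lieDIter f n φ)

/-- Indicator of a species inside a complex, as a real number. -/
def ind [DecidableEq σ] (a x : σ) : ℝ := if a = x then 1 else 0

set_option linter.unusedSectionVars false

section Machinery
variable [Fintype σ] [DecidableEq σ]

noncomputable def Phi (ω : σ → ℝ) (μ : σ →₀ ℕ) : ℝ := μ.sum fun x k => ω x * k

lemma Phi_add (ω : σ → ℝ) (μ ν : σ →₀ ℕ) : Phi ω (μ + ν) = Phi ω μ + Phi ω ν :=
  Finsupp.sum_add_index' (by simp) (by intro a b1 b2; push_cast; ring)

lemma Phi_single (ω : σ → ℝ) (x : σ) : Phi ω (Finsupp.single x 1) = ω x := by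
  rw [Phi, Finsupp.sum_single_index (by simp)]; simp

lemma coeff_mul_ne_zero {p q : MvPolynomial σ ℝ} {ν : σ →₀ ℕ} (h : coeff ν (p * q) ≠ 0) :
    ∃ μ ρ, μ + ρ = ν ∧ coeff μ p ≠ 0 ∧ coeff ρ q ≠ 0 := by
  rw [coeff_mul] at h
  obtain ⟨x, hx, hne⟩ := Finset.exists_ne_zero_of_sum_ne_zero h
  exact ⟨x.1, x.2, Finset.HasAntidiagonal.mem_antidiagonal.mp hx,
    fun h => hne (by rw [h, zero_mul]), fun h => hne (by rw [h, mul_zero])⟩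

lemma coeff_pderiv_ne_zero {φ : MvPolynomial σ ℝ} {x : σ} {ν : σ →₀ ℕ}
    (h : coeff ν (pderiv x φ) ≠ 0) :
    ∃ μ, coeff μ φ ≠ 0 ∧ μ x ≠ 0 ∧ ν + Finsupp.single x 1 = μ := by
  have h2 : coeff ν (pderiv x (∑ μ ∈ φ.support, monomial μ (coeff μ φ))) ≠ 0 := by
    rw [← as_sum φ]; exact h
  rw [map_sum] at h2
  rw [coeff_sum] at h2
  obtain ⟨μ, hμ, hne⟩ := Finset.exists_ne_zero_of_sum_ne_zero h2
  rw [pderiv_monomial, coeff_monomial] at hne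
  split_ifs at hne with hEq
  · refine ⟨μ, MvPolynomial.mem_support_iff.mp hμ, ?_, ?_⟩
    · intro h0
      rw [h0] at hne; simp at hne
    · have hx1 : Finsupp.single x 1 ≤ μ := by
        rw [Finsupp.single_le_iff]
        rcases Nat.eq_zero_or_pos (μ x) with h0 | h1
        · rw [h0] at hne; simp at hne
        · exact h1
      rw [← hEq, tsub_add_cancel_of_le hx1]
  · exact absurd rfl hne

lemma lieD_coeff_ne_zero {f : σ → MvPolynomial σ ℝ} {φ : MvPolynomial σ ℝ} {ν : σ →₀ ℕ}
    (h : coeff ν (lieD f φ) ≠ 0) :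
    ∃ μ x ρ, coeff μ φ ≠ 0 ∧ μ x ≠ 0 ∧ coeff ρ (f x) ≠ 0 ∧ ν + Finsupp.single x 1 = μ + ρ := by
  rw [lieD, coeff_sum] at h
  obtain ⟨x, _, hne⟩ := Finset.exists_ne_zero_of_sum_ne_zero h
  obtain ⟨μ', ρ, hadd, h1, h2⟩ := coeff_mul_ne_zero hne
  obtain ⟨μ, hμ, hμx, hμeq⟩ := coeff_pderiv_ne_zero h1
  exact ⟨μ, x, ρ, hμ, hμx, h2, by rw [← hadd, ← hμeq]; abel⟩

lemma Phi_lieD_mono {f : σ → MvPolynomial σ ℝ} {ω : σ → ℝ} (hω : ∀ x, ω x ≤ 1)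
    (hf : ∀ x ρ, coeff ρ (f x) ≠ 0 → 1 ≤ Phi ω ρ)
    {t : ℝ} {φ : MvPolynomial σ ℝ} (hφ : ∀ μ, coeff μ φ ≠ 0 → t ≤ Phi ω μ) :
    ∀ ν, coeff ν (lieD f φ) ≠ 0 → t ≤ Phi ω ν := by
  intro ν h
  obtain ⟨μ, x, ρ, h1, h2, h3, h4⟩ := lieD_coeff_ne_zero h
  have h5 := congrArg (Phi ω) h4
  rw [Phi_add, Phi_add, Phi_single] at h5
  have := hφ μ h1; have := hf x ρ h3; have := hω x
  linarith

lemma Phi_lieDIter_mono {f : σ → MvPolynomial σ ℝ} {ω : σ → ℝ} (hω : ∀ x, ω x ≤ 1)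
    (hf : ∀ x ρ, coeff ρ (f x) ≠ 0 → 1 ≤ Phi ω ρ)
    {t : ℝ} {φ : MvPolynomial σ ℝ} (hφ : ∀ μ, coeff μ φ ≠ 0 → t ≤ Phi ω μ) :
    ∀ ℓ ν, coeff ν (lieDIter f ℓ φ) ≠ 0 → t ≤ Phi ω ν := by
  intro ℓ
  induction ℓ with
  | zero => exact hφ
  | succ m ih => exact Phi_lieD_mono hω hf ih

/-- The "class" invariant used for the product `e^{(m)}·sL1` bookkeeping. -/
def GoodM (ω : σ → ℝ) (e : σ) (ν : σ →₀ ℕ) : Prop :=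
  2 ≤ Phi ω ν ∨ (ν e ≠ 0 ∧ 1 + ω e ≤ Phi ω ν)

lemma GoodM_lieD {f : σ → MvPolynomial σ ℝ} {ω : σ → ℝ} {e : σ} (hω : ∀ x, ω x ≤ 1)
    (hf : ∀ x ρ, coeff ρ (f x) ≠ 0 → 1 ≤ Phi ω ρ)
    {φ : MvPolynomial σ ℝ} (hφ : ∀ μ, coeff μ φ ≠ 0 → GoodM ω e μ) :
    ∀ ν, coeff ν (lieD f φ) ≠ 0 → GoodM ω e ν := by
  intro ν h
  obtain ⟨μ, x, ρ, h1, h2, h3, h4⟩ := lieD_coeff_ne_zero h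
  have h5 := congrArg (Phi ω) h4
  rw [Phi_add, Phi_add, Phi_single] at h5
  have hρ := hf x ρ h3
  have hx := hω x
  rcases hφ μ h1 with hc | ⟨he, hc⟩
  · exact Or.inl (by linarith)
  · by_cases hxe : x = e
    · subst hxe
      exact Or.inl (by linarith)
    · refine Or.inr ⟨?_, by linarith⟩
      have h6 := congrArg (fun m : σ →₀ ℕ => m e) h4
      simp only [Finsupp.add_apply, Finsupp.single_apply] at h6
      rw [if_neg hxe] at h6
      omega

lemma GoodM_lieDIter {f : σ → MvPolynomial σ ℝ} {ω : σ → ℝ} {e : σ} (hω : ∀ x, ω x ≤ 1)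
    (hf : ∀ x ρ, coeff ρ (f x) ≠ 0 → 1 ≤ Phi ω ρ)
    {φ : MvPolynomial σ ℝ} (hφ : ∀ μ, coeff μ φ ≠ 0 → GoodM ω e μ) :
    ∀ ℓ ν, coeff ν (lieDIter f ℓ φ) ≠ 0 → GoodM ω e ν := by
  intro ℓ
  induction ℓ with
  | zero => exact hφ
  | succ m ih => exact GoodM_lieD hω hf ih

lemma lieD_add (f : σ → MvPolynomial σ ℝ) (p q : MvPolynomial σ ℝ) :
    lieD f (p + q) = lieD f p + lieD f q := by
  simp only [lieD, map_add, add_mul, Finset.sum_add_distrib]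

lemma lieD_C_mul (f : σ → MvPolynomial σ ℝ) (r : ℝ) (p : MvPolynomial σ ℝ) :
    lieD f (C r * p) = C r * lieD f p := by
  simp only [lieD, Finset.mul_sum]
  congr 1; funext x
  rw [Derivation.leibniz]
  simp [pderiv_C, mul_assoc]

lemma lieD_mul (f : σ → MvPolynomial σ ℝ) (p q : MvPolynomial σ ℝ) :
    lieD f (p * q) = lieD f p * q + p * lieD f q := by
  simp only [lieD, Finset.sum_mul, Finset.mul_sum, ← Finset.sum_add_distrib]
  congr 1; funext x
  rw [Derivation.leibniz]
  ring_nf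

lemma lieD_zero (f : σ → MvPolynomial σ ℝ) : lieD f 0 = 0 := by
  simp [lieD]

lemma lieDIter_succ' (f : σ → MvPolynomial σ ℝ) (n : ℕ) (φ : MvPolynomial σ ℝ) :
    lieDIter f (n + 1) φ = lieDIter f n (lieD f φ) := by
  induction n with
  | zero => rfl
  | succ m ih => rw [show lieDIter f (m+1+1) φ = lieD f (lieDIter f (m+1) φ) from rfl, ih]; rfl

lemma lieDIter_add (f : σ → MvPolynomial σ ℝ) (ℓ : ℕ) (p q : MvPolynomial σ ℝ) :
    lieDIter f ℓ (p + q) = lieDIter f ℓ p + lieDIter f ℓ q := by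
  induction ℓ with
  | zero => rfl
  | succ m ih => show lieD f _ = _; rw [ih, lieD_add]; rfl

lemma lieDIter_C_mul (f : σ → MvPolynomial σ ℝ) (ℓ : ℕ) (r : ℝ) (p : MvPolynomial σ ℝ) :
    lieDIter f ℓ (C r * p) = C r * lieDIter f ℓ p := by
  induction ℓ with
  | zero => rfl
  | succ m ih => show lieD f _ = _; rw [ih, lieD_C_mul]; rfl

lemma lieDIter_zero_poly (f : σ → MvPolynomial σ ℝ) (ℓ : ℕ) : lieDIter f ℓ 0 = 0 := by
  induction ℓ with
  | zero => rfl
  | succ m ih => show lieD f _ = 0; rw [ih, lieD_zero]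

lemma lieDIter_sum (f : σ → MvPolynomial σ ℝ) (ℓ : ℕ) {α : Type*} (s : Finset α)
    (g : α → MvPolynomial σ ℝ) :
    lieDIter f ℓ (∑ a ∈ s, g a) = ∑ a ∈ s, lieDIter f ℓ (g a) := by
  classical
  induction s using Finset.induction with
  | empty => simp [lieDIter_zero_poly]
  | insert _ _ hnot ih => rw [Finset.sum_insert hnot, lieDIter_add, ih, Finset.sum_insert hnot]

end Machinery

/-- The `N`-layer cascade network. Setting `S_{0,L_0} := E`, layer `m` (`1 ≤ m ≤ N`)
consists of the two connected components
`S_{m-1,L_{m-1}} + S_{m,0} ⇄ U_{m,1} → ⋯ ⇄ U_{m,L_m} → S_{m-1,L_{m-1}} + S_{m,L_m}`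
(rate constants `a_{m,j}, b_{m,j}, c_{m,j}`, encoded as indices `0,1,2`) and
`F_m + S_{m,L_m} ⇄ V_{m,L_m} → ⋯ ⇄ V_{m,1} → F_m + S_{m,0}`
(rate constants `ã_{m,j}, b̃_{m,j}, c̃_{m,j}`, encoded as indices `3,4,5`).
All the species `E`, `F m`, `S m j`, `U m j`, `V m j` (in the relevant index ranges)
are pairwise distinct. -/
structure Cascade (σ : Type*) where
  N : ℕ
  Npos : 1 ≤ N
  L : ℕ → ℕ
  Lpos : ∀ m, 1 ≤ m → m ≤ N → 1 ≤ L m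
  E : σ
  F : ℕ → σ
  S : ℕ → ℕ → σ
  U : ℕ → ℕ → σ
  V : ℕ → ℕ → σ
  hEF : ∀ m, 1 ≤ m → m ≤ N → E ≠ F m
  hES : ∀ m j, 1 ≤ m → m ≤ N → j ≤ L m → E ≠ S m j
  hEU : ∀ m j, 1 ≤ m → m ≤ N → 1 ≤ j → j ≤ L m → E ≠ U m j
  hEV : ∀ m j, 1 ≤ m → m ≤ N → 1 ≤ j → j ≤ L m → E ≠ V m j
  hFinj : ∀ m m', 1 ≤ m → m ≤ N → 1 ≤ m' → m' ≤ N → F m = F m' → m = m'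
  hFS : ∀ m m' j', 1 ≤ m → m ≤ N → 1 ≤ m' → m' ≤ N → j' ≤ L m' → F m ≠ S m' j'
  hFU : ∀ m m' j', 1 ≤ m → m ≤ N → 1 ≤ m' → m' ≤ N → 1 ≤ j' → j' ≤ L m' → F m ≠ U m' j'
  hFV : ∀ m m' j', 1 ≤ m → m ≤ N → 1 ≤ m' → m' ≤ N → 1 ≤ j' → j' ≤ L m' → F m ≠ V m' j'
  hSinj : ∀ m j m' j', 1 ≤ m → m ≤ N → j ≤ L m → 1 ≤ m' → m' ≤ N → j' ≤ L m' →
    S m j = S m' j' → m = m' ∧ j = j'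
  hSU : ∀ m j m' j', 1 ≤ m → m ≤ N → j ≤ L m → 1 ≤ m' → m' ≤ N → 1 ≤ j' → j' ≤ L m' →
    S m j ≠ U m' j'
  hSV : ∀ m j m' j', 1 ≤ m → m ≤ N → j ≤ L m → 1 ≤ m' → m' ≤ N → 1 ≤ j' → j' ≤ L m' →
    S m j ≠ V m' j'
  hUinj : ∀ m j m' j', 1 ≤ m → m ≤ N → 1 ≤ j → j ≤ L m → 1 ≤ m' → m' ≤ N → 1 ≤ j' →
    j' ≤ L m' → U m j = U m' j' → m = m' ∧ j = j'
  hUV : ∀ m j m' j', 1 ≤ m → m ≤ N → 1 ≤ j → j ≤ L m → 1 ≤ m' → m' ≤ N → 1 ≤ j' →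
    j' ≤ L m' → U m j ≠ V m' j'
  hVinj : ∀ m j m' j', 1 ≤ m → m ≤ N → 1 ≤ j → j ≤ L m → 1 ≤ m' → m' ≤ N → 1 ≤ j' →
    j' ≤ L m' → V m j = V m' j' → m = m' ∧ j = j'

namespace Cascade

variable [Fintype σ] [DecidableEq σ]

/-- The species `S_{m, L_m}`, with the convention `S_{0, L_0} := E`; `act (m-1)` is the
enzyme acting on the first component of layer `m`. -/
def act (c : Cascade σ) (m : ℕ) : σ := if m = 0 then c.E else c.S m (c.L m)

/-- The mass-action right-hand side of the cascade system; `k m j t` is the rate constant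
of layer `m`, block `j`, with `t = 0,…,5` for `a_{m,j}, b_{m,j}, c_{m,j}, ã_{m,j},
b̃_{m,j}, c̃_{m,j}`. -/
noncomputable def rhs (c : Cascade σ) (k : ℕ → ℕ → Fin 6 → ℝ) (x : σ) :
    MvPolynomial σ ℝ :=
  ∑ m ∈ Finset.Icc 1 c.N, ∑ j ∈ Finset.Icc 1 (c.L m),
    (C (k m j 0 * (ind (c.U m j) x - ind (c.act (m - 1)) x - ind (c.S m (j - 1)) x)) *
        (X (c.act (m - 1)) * X (c.S m (j - 1)))
      + C (k m j 1 * (ind (c.act (m - 1)) x + ind (c.S m (j - 1)) x - ind (c.U m j) x)) *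
        X (c.U m j)
      + C (k m j 2 * (ind (c.act (m - 1)) x + ind (c.S m j) x - ind (c.U m j) x)) *
        X (c.U m j)
      + C (k m j 3 * (ind (c.V m j) x - ind (c.F m) x - ind (c.S m j) x)) *
        (X (c.F m) * X (c.S m j))
      + C (k m j 4 * (ind (c.F m) x + ind (c.S m j) x - ind (c.V m j) x)) *
        X (c.V m j)
      + C (k m j 5 * (ind (c.F m) x + ind (c.S m (j - 1)) x - ind (c.V m j) x)) *
        X (c.V m j))

/-- `x^{(ℓ)}(x, k)`: the `ℓ`-th iterated total derivative of the variable `x` along the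
cascade mass-action system. -/
noncomputable def deriv (c : Cascade σ) (k : ℕ → ℕ → Fin 6 → ℝ) (ℓ : ℕ) (x : σ) :
    MvPolynomial σ ℝ :=
  lieDIter (c.rhs k) ℓ (X x)

/-- The non-intermediate `x₁` reacts with the non-intermediate `x₂` in the cascade. -/
def reactsWith (c : Cascade σ) (x₁ x₂ : σ) : Prop :=
  ∃ m j, 1 ≤ m ∧ m ≤ c.N ∧ 1 ≤ j ∧ j ≤ c.L m ∧
    ((x₁ = c.act (m - 1) ∧ x₂ = c.S m (j - 1)) ∨
     (x₂ = c.act (m - 1) ∧ x₁ = c.S m (j - 1)) ∨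
     (x₁ = c.F m ∧ x₂ = c.S m j) ∨ (x₂ = c.F m ∧ x₁ = c.S m j))

/-- The exponent vector `𝒫 = ∏_{i=m+1}^n s_{i, L_i - 1}`. -/
noncomputable def PP (c : Cascade σ) (n m : ℕ) : σ →₀ ℕ :=
  ∑ i ∈ Finset.Icc (m + 1) n, Finsupp.single (c.S i (c.L i - 1)) 1

/-- The constant `𝒞 = ∏_{i=m+1}^n c_{i, L_i} a_{i, L_i}`. -/
def CC (c : Cascade σ) (k : ℕ → ℕ → Fin 6 → ℝ) (n m : ℕ) : ℝ :=
  ∏ i ∈ Finset.Icc (m + 1) n, (k i (c.L i) 2 * k i (c.L i) 0)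

/-- The constant `𝒦 = Σ_{i=m+1}^n K_{i, L_i}`. -/
def KK (c : Cascade σ) (k : ℕ → ℕ → Fin 6 → ℝ) (n m : ℕ) : ℝ :=
  ∑ i ∈ Finset.Icc (m + 1) n, (k i (c.L i) 1 + k i (c.L i) 2)

/-- One block of the mass-action right-hand side. -/
noncomputable def blk (c : Cascade σ) (k : ℕ → ℕ → Fin 6 → ℝ) (m j : ℕ) (x : σ) :
    MvPolynomial σ ℝ :=
  C (k m j 0 * (ind (c.U m j) x - ind (c.act (m - 1)) x - ind (c.S m (j - 1)) x)) *
      (X (c.act (m - 1)) * X (c.S m (j - 1)))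
    + C (k m j 1 * (ind (c.act (m - 1)) x + ind (c.S m (j - 1)) x - ind (c.U m j) x)) *
      X (c.U m j)
    + C (k m j 2 * (ind (c.act (m - 1)) x + ind (c.S m j) x - ind (c.U m j) x)) *
      X (c.U m j)
    + C (k m j 3 * (ind (c.V m j) x - ind (c.F m) x - ind (c.S m j) x)) *
      (X (c.F m) * X (c.S m j))
    + C (k m j 4 * (ind (c.F m) x + ind (c.S m j) x - ind (c.V m j) x)) * X (c.V m j)
    + C (k m j 5 * (ind (c.F m) x + ind (c.S m (j - 1)) x - ind (c.V m j) x)) * X (c.V m j)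

lemma rhs_def' (c : Cascade σ) (k : ℕ → ℕ → Fin 6 → ℝ) (x : σ) :
    c.rhs k x = ∑ m ∈ Finset.Icc 1 c.N, ∑ j ∈ Finset.Icc 1 (c.L m), blk c k m j x := rfl

lemma blk_eq_zero (c : Cascade σ) (k : ℕ → ℕ → Fin 6 → ℝ) {m j : ℕ} {x : σ}
    (h1 : c.U m j ≠ x) (h2 : c.act (m - 1) ≠ x) (h3 : c.S m (j - 1) ≠ x)
    (h4 : c.S m j ≠ x) (h5 : c.F m ≠ x) (h6 : c.V m j ≠ x) :
    blk c k m j x = 0 := by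
  simp [blk, ind, h1, h2, h3, h4, h5, h6]

lemma act_spec (c : Cascade σ) {m : ℕ} (hm1 : 1 ≤ m) :
    (m = 1 ∧ c.act (m - 1) = c.E) ∨
      (2 ≤ m ∧ c.act (m - 1) = c.S (m - 1) (c.L (m - 1))) := by
  rcases Nat.eq_or_lt_of_le hm1 with h | h
  · refine Or.inl ⟨h.symm, ?_⟩
    rw [← h]; simp [Cascade.act]
  · exact Or.inr ⟨h, by rw [Cascade.act, if_neg (by omega)]⟩

lemma act_ne_U (c : Cascade σ) {m m' j' : ℕ} (hm1 : 1 ≤ m) (hmN : m ≤ c.N)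
    (hm1' : 1 ≤ m') (hmN' : m' ≤ c.N) (hj1 : 1 ≤ j') (hjL : j' ≤ c.L m') :
    c.act (m - 1) ≠ c.U m' j' := by
  rcases c.act_spec hm1 with ⟨_, h⟩ | ⟨h2, h⟩ <;> rw [h]
  · exact c.hEU m' j' hm1' hmN' hj1 hjL
  · exact c.hSU (m - 1) (c.L (m - 1)) m' j' (by omega) (by omega) le_rfl hm1' hmN' hj1 hjL

lemma act_ne_V (c : Cascade σ) {m m' j' : ℕ} (hm1 : 1 ≤ m) (hmN : m ≤ c.N)
    (hm1' : 1 ≤ m') (hmN' : m' ≤ c.N) (hj1 : 1 ≤ j') (hjL : j' ≤ c.L m') :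
    c.act (m - 1) ≠ c.V m' j' := by
  rcases c.act_spec hm1 with ⟨_, h⟩ | ⟨h2, h⟩ <;> rw [h]
  · exact c.hEV m' j' hm1' hmN' hj1 hjL
  · exact c.hSV (m - 1) (c.L (m - 1)) m' j' (by omega) (by omega) le_rfl hm1' hmN' hj1 hjL

/-- `act (m-1) = S m' j'` forces `m - 1 = m'` (so in particular `m' + 1 = m`) and `j' = L m'`. -/
lemma act_eq_S (c : Cascade σ) {m m' j' : ℕ} (hm1 : 1 ≤ m) (hmN : m ≤ c.N)
    (hm1' : 1 ≤ m') (hmN' : m' ≤ c.N) (hjL : j' ≤ c.L m')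
    (h : c.act (m - 1) = c.S m' j') : m = m' + 1 ∧ j' = c.L m' := by
  rcases c.act_spec hm1 with ⟨_, he⟩ | ⟨h2, he⟩ <;> rw [he] at h
  · exact absurd h (c.hES m' j' hm1' hmN' hjL)
  · have := c.hSinj (m - 1) (c.L (m - 1)) m' j' (by omega) (by omega) le_rfl hm1' hmN' hjL h
    exact ⟨by omega, by rw [← this.1]; exact this.2.symm⟩

lemma rhs_U_closed (c : Cascade σ) (k : ℕ → ℕ → Fin 6 → ℝ) {n : ℕ}
    (hn1 : 1 ≤ n) (hnN : n ≤ c.N) :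
    c.rhs k (c.U n (c.L n)) =
      C (k n (c.L n) 0) * (X (c.act (n - 1)) * X (c.S n (c.L n - 1)))
        + C (-(k n (c.L n) 1 + k n (c.L n) 2)) * X (c.U n (c.L n)) := by
  have hL := c.Lpos n hn1 hnN
  rw [rhs_def']
  rw [Finset.sum_eq_single_of_mem n (Finset.mem_Icc.mpr ⟨hn1, hnN⟩)]
  · rw [Finset.sum_eq_single_of_mem (c.L n) (Finset.mem_Icc.mpr ⟨hL, le_rfl⟩)]
    · have e1 : c.act (n - 1) ≠ c.U n (c.L n) := c.act_ne_U hn1 hnN hn1 hnN hL le_rfl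
      have e3 : c.S n (c.L n - 1) ≠ c.U n (c.L n) :=
        c.hSU n (c.L n - 1) n (c.L n) hn1 hnN (by omega) hn1 hnN hL le_rfl
      have e4 : c.S n (c.L n) ≠ c.U n (c.L n) :=
        c.hSU n (c.L n) n (c.L n) hn1 hnN le_rfl hn1 hnN hL le_rfl
      have e5 : c.F n ≠ c.U n (c.L n) := c.hFU n n (c.L n) hn1 hnN hn1 hnN hL le_rfl
      have e6 : c.V n (c.L n) ≠ c.U n (c.L n) :=
        (c.hUV n (c.L n) n (c.L n) hn1 hnN hL le_rfl hn1 hnN hL le_rfl).symm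
      simp only [blk, ind, if_pos rfl, if_neg e1, if_neg e3, if_neg e4, if_neg e5, if_neg e6]
      simp only [eq_self_iff_true, if_true, sub_zero, zero_add, zero_sub, mul_neg_one,
        mul_one, mul_zero, map_zero, zero_mul, add_zero, map_neg, map_add, neg_add]
      ring
    · intro b hb hbne
      rw [Finset.mem_Icc] at hb
      refine blk_eq_zero c k ?_ (c.act_ne_U hn1 hnN hn1 hnN hL le_rfl) ?_ ?_ ?_ ?_
      · exact fun hEq => hbne (c.hUinj n b n (c.L n) hn1 hnN hb.1 hb.2 hn1 hnN hL le_rfl hEq).2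
      · exact c.hSU n (b - 1) n (c.L n) hn1 hnN (by omega) hn1 hnN hL le_rfl
      · exact c.hSU n b n (c.L n) hn1 hnN hb.2 hn1 hnN hL le_rfl
      · exact c.hFU n n (c.L n) hn1 hnN hn1 hnN hL le_rfl
      · exact (c.hUV n (c.L n) n b hn1 hnN hL le_rfl hn1 hnN hb.1 hb.2).symm
  · intro a ha hane
    rw [Finset.mem_Icc] at ha
    refine Finset.sum_eq_zero fun b hb => ?_
    rw [Finset.mem_Icc] at hb
    refine blk_eq_zero c k ?_ (c.act_ne_U ha.1 ha.2 hn1 hnN hL le_rfl) ?_ ?_ ?_ ?_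
    · exact fun hEq => hane (c.hUinj a b n (c.L n) ha.1 ha.2 hb.1 hb.2 hn1 hnN hL le_rfl hEq).1
    · exact c.hSU a (b - 1) n (c.L n) ha.1 ha.2 (by omega) hn1 hnN hL le_rfl
    · exact c.hSU a b n (c.L n) ha.1 ha.2 hb.2 hn1 hnN hL le_rfl
    · exact c.hFU a n (c.L n) ha.1 ha.2 hn1 hnN hL le_rfl
    · exact (c.hUV n (c.L n) a b hn1 hnN hL le_rfl ha.1 ha.2 hb.1 hb.2).symm

lemma rhs_V_closed (c : Cascade σ) (k : ℕ → ℕ → Fin 6 → ℝ) {n : ℕ}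
    (hn1 : 1 ≤ n) (hnN : n ≤ c.N) :
    c.rhs k (c.V n (c.L n)) =
      C (k n (c.L n) 3) * (X (c.F n) * X (c.S n (c.L n)))
        + C (-(k n (c.L n) 4 + k n (c.L n) 5)) * X (c.V n (c.L n)) := by
  have hL := c.Lpos n hn1 hnN
  rw [rhs_def']
  rw [Finset.sum_eq_single_of_mem n (Finset.mem_Icc.mpr ⟨hn1, hnN⟩)]
  · rw [Finset.sum_eq_single_of_mem (c.L n) (Finset.mem_Icc.mpr ⟨hL, le_rfl⟩)]
    · have e1 : c.U n (c.L n) ≠ c.V n (c.L n) :=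
        c.hUV n (c.L n) n (c.L n) hn1 hnN hL le_rfl hn1 hnN hL le_rfl
      have e2 : c.act (n - 1) ≠ c.V n (c.L n) := c.act_ne_V hn1 hnN hn1 hnN hL le_rfl
      have e3 : c.S n (c.L n - 1) ≠ c.V n (c.L n) :=
        c.hSV n (c.L n - 1) n (c.L n) hn1 hnN (by omega) hn1 hnN hL le_rfl
      have e4 : c.S n (c.L n) ≠ c.V n (c.L n) :=
        c.hSV n (c.L n) n (c.L n) hn1 hnN le_rfl hn1 hnN hL le_rfl
      have e5 : c.F n ≠ c.V n (c.L n) := c.hFV n n (c.L n) hn1 hnN hn1 hnN hL le_rfl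
      simp only [blk, ind, if_pos rfl, if_neg e1, if_neg e2, if_neg e3, if_neg e4, if_neg e5]
      simp only [eq_self_iff_true, if_true, sub_zero, zero_add, zero_sub, mul_neg_one,
        mul_one, mul_zero, map_zero, zero_mul, add_zero, map_neg, map_add, neg_add]
      ring
    · intro b hb hbne
      rw [Finset.mem_Icc] at hb
      refine blk_eq_zero c k (c.hUV n b n (c.L n) hn1 hnN hb.1 hb.2 hn1 hnN hL le_rfl)
        (c.act_ne_V hn1 hnN hn1 hnN hL le_rfl) ?_ ?_ ?_ ?_
      · exact c.hSV n (b - 1) n (c.L n) hn1 hnN (by omega) hn1 hnN hL le_rfl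
      · exact c.hSV n b n (c.L n) hn1 hnN hb.2 hn1 hnN hL le_rfl
      · exact c.hFV n n (c.L n) hn1 hnN hn1 hnN hL le_rfl
      · exact fun hEq => hbne (c.hVinj n b n (c.L n) hn1 hnN hb.1 hb.2 hn1 hnN hL le_rfl hEq).2
  · intro a ha hane
    rw [Finset.mem_Icc] at ha
    refine Finset.sum_eq_zero fun b hb => ?_
    rw [Finset.mem_Icc] at hb
    refine blk_eq_zero c k (c.hUV a b n (c.L n) ha.1 ha.2 hb.1 hb.2 hn1 hnN hL le_rfl)
      (c.act_ne_V ha.1 ha.2 hn1 hnN hL le_rfl) ?_ ?_ ?_ ?_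
    · exact c.hSV a (b - 1) n (c.L n) ha.1 ha.2 (by omega) hn1 hnN hL le_rfl
    · exact c.hSV a b n (c.L n) ha.1 ha.2 hb.2 hn1 hnN hL le_rfl
    · exact c.hFV a n (c.L n) ha.1 ha.2 hn1 hnN hL le_rfl
    · exact fun hEq => hane (c.hVinj a b n (c.L n) ha.1 ha.2 hb.1 hb.2 hn1 hnN hL le_rfl hEq).1


lemma rhs_U_gen (c : Cascade σ) (k : ℕ → ℕ → Fin 6 → ℝ) {m j : ℕ}
    (hm1 : 1 ≤ m) (hmN : m ≤ c.N) (hj1 : 1 ≤ j) (hjL : j ≤ c.L m) :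
    c.rhs k (c.U m j) =
      C (k m j 0) * (X (c.act (m - 1)) * X (c.S m (j - 1)))
        + C (-(k m j 1 + k m j 2)) * X (c.U m j) := by
  rw [rhs_def']
  rw [Finset.sum_eq_single_of_mem m (Finset.mem_Icc.mpr ⟨hm1, hmN⟩)]
  · rw [Finset.sum_eq_single_of_mem j (Finset.mem_Icc.mpr ⟨hj1, hjL⟩)]
    · have e1 : c.act (m - 1) ≠ c.U m j := c.act_ne_U hm1 hmN hm1 hmN hj1 hjL
      have e3 : c.S m (j - 1) ≠ c.U m j :=
        c.hSU m (j - 1) m j hm1 hmN (by omega) hm1 hmN hj1 hjL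
      have e4 : c.S m j ≠ c.U m j := c.hSU m j m j hm1 hmN hjL hm1 hmN hj1 hjL
      have e5 : c.F m ≠ c.U m j := c.hFU m m j hm1 hmN hm1 hmN hj1 hjL
      have e6 : c.V m j ≠ c.U m j := (c.hUV m j m j hm1 hmN hj1 hjL hm1 hmN hj1 hjL).symm
      simp only [blk, ind, if_neg e1, if_neg e3, if_neg e4, if_neg e5, if_neg e6,
        eq_self_iff_true, if_true, sub_zero, zero_add, zero_sub, mul_neg_one,
        mul_one, mul_zero, map_zero, zero_mul, add_zero, map_neg, map_add, neg_add]
      ring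
    · intro b hb hbne
      rw [Finset.mem_Icc] at hb
      refine blk_eq_zero c k ?_ (c.act_ne_U hm1 hmN hm1 hmN hj1 hjL) ?_ ?_ ?_ ?_
      · exact fun hEq => hbne (c.hUinj m b m j hm1 hmN hb.1 hb.2 hm1 hmN hj1 hjL hEq).2
      · exact c.hSU m (b - 1) m j hm1 hmN (by omega) hm1 hmN hj1 hjL
      · exact c.hSU m b m j hm1 hmN hb.2 hm1 hmN hj1 hjL
      · exact c.hFU m m j hm1 hmN hm1 hmN hj1 hjL
      · exact (c.hUV m j m b hm1 hmN hj1 hjL hm1 hmN hb.1 hb.2).symm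
  · intro a ha hane
    rw [Finset.mem_Icc] at ha
    refine Finset.sum_eq_zero fun b hb => ?_
    rw [Finset.mem_Icc] at hb
    refine blk_eq_zero c k ?_ (c.act_ne_U ha.1 ha.2 hm1 hmN hj1 hjL) ?_ ?_ ?_ ?_
    · exact fun hEq => hane (c.hUinj a b m j ha.1 ha.2 hb.1 hb.2 hm1 hmN hj1 hjL hEq).1
    · exact c.hSU a (b - 1) m j ha.1 ha.2 (by omega) hm1 hmN hj1 hjL
    · exact c.hSU a b m j ha.1 ha.2 hb.2 hm1 hmN hj1 hjL
    · exact c.hFU a m j ha.1 ha.2 hm1 hmN hj1 hjL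
    · exact (c.hUV m j a b hm1 hmN hj1 hjL ha.1 ha.2 hb.1 hb.2).symm

lemma rhs_S_closed (c : Cascade σ) (k : ℕ → ℕ → Fin 6 → ℝ) {n : ℕ}
    (hn1 : 1 ≤ n) (hnN : n ≤ c.N) :
    c.rhs k (c.S n (c.L n)) =
      C (k n (c.L n) 2) * X (c.U n (c.L n))
      + (C (-(k n (c.L n) 3)) * (X (c.F n) * X (c.S n (c.L n)))
        + C (k n (c.L n) 4) * X (c.V n (c.L n))
        + (if n + 1 ≤ c.N then
            ∑ j ∈ Finset.Icc 1 (c.L (n + 1)),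
              (C (-(k (n + 1) j 0)) * (X (c.S n (c.L n)) * X (c.S (n + 1) (j - 1)))
                + C (k (n + 1) j 1 + k (n + 1) j 2) * X (c.U (n + 1) j))
          else 0)) := by
  have hL := c.Lpos n hn1 hnN
  rw [rhs_def']
  have hzero : ∀ a ∈ Finset.Icc 1 c.N, a ≠ n → a ≠ n + 1 →
      ∑ j ∈ Finset.Icc 1 (c.L a), blk c k a j (c.S n (c.L n)) = 0 := by
    intro a ha hane hane1
    rw [Finset.mem_Icc] at ha
    refine Finset.sum_eq_zero fun b hb => ?_
    rw [Finset.mem_Icc] at hb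
    refine blk_eq_zero c k
      ((c.hSU n (c.L n) a b hn1 hnN le_rfl ha.1 ha.2 hb.1 hb.2).symm) ?_ ?_ ?_ ?_ ?_
    · intro hEq
      have := c.act_eq_S ha.1 ha.2 hn1 hnN le_rfl hEq
      omega
    · intro hEq
      have := c.hSinj a (b - 1) n (c.L n) ha.1 ha.2 (by omega) hn1 hnN le_rfl hEq
      omega
    · intro hEq
      have := c.hSinj a b n (c.L n) ha.1 ha.2 hb.2 hn1 hnN le_rfl hEq
      omega
    · exact c.hFS a n (c.L n) ha.1 ha.2 hn1 hnN le_rfl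
    · exact (c.hSV n (c.L n) a b hn1 hnN le_rfl ha.1 ha.2 hb.1 hb.2).symm
  have hinner_n : ∑ j ∈ Finset.Icc 1 (c.L n), blk c k n j (c.S n (c.L n)) =
      C (k n (c.L n) 2) * X (c.U n (c.L n))
        + (C (-(k n (c.L n) 3)) * (X (c.F n) * X (c.S n (c.L n)))
          + C (k n (c.L n) 4) * X (c.V n (c.L n))) := by
    rw [Finset.sum_eq_single_of_mem (c.L n) (Finset.mem_Icc.mpr ⟨hL, le_rfl⟩)]
    · have e1 : c.U n (c.L n) ≠ c.S n (c.L n) :=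
        (c.hSU n (c.L n) n (c.L n) hn1 hnN le_rfl hn1 hnN hL le_rfl).symm
      have e2 : c.act (n - 1) ≠ c.S n (c.L n) := by
        intro hEq
        have := c.act_eq_S hn1 hnN hn1 hnN le_rfl hEq
        omega
      have e3 : c.S n (c.L n - 1) ≠ c.S n (c.L n) := by
        intro hEq
        have := c.hSinj n (c.L n - 1) n (c.L n) hn1 hnN (by omega) hn1 hnN le_rfl hEq
        omega
      have e5 : c.F n ≠ c.S n (c.L n) := c.hFS n n (c.L n) hn1 hnN hn1 hnN le_rfl
      have e6 : c.V n (c.L n) ≠ c.S n (c.L n) :=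
        (c.hSV n (c.L n) n (c.L n) hn1 hnN le_rfl hn1 hnN hL le_rfl).symm
      simp only [blk, ind, if_neg e1, if_neg e2, if_neg e3, if_neg e5, if_neg e6,
        eq_self_iff_true, if_true, sub_zero, zero_add, zero_sub, add_zero, mul_neg_one,
        mul_one, mul_zero, map_zero, zero_mul, map_neg, map_add, neg_add]
      ring
    · intro b hb hbne
      rw [Finset.mem_Icc] at hb
      refine blk_eq_zero c k
        ((c.hSU n (c.L n) n b hn1 hnN le_rfl hn1 hnN hb.1 hb.2).symm) ?_ ?_ ?_ ?_ ?_
      · intro hEq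
        have := c.act_eq_S hn1 hnN hn1 hnN le_rfl hEq
        omega
      · intro hEq
        have := c.hSinj n (b - 1) n (c.L n) hn1 hnN (by omega) hn1 hnN le_rfl hEq
        omega
      · intro hEq
        have := c.hSinj n b n (c.L n) hn1 hnN hb.2 hn1 hnN le_rfl hEq
        exact hbne this.2
      · exact c.hFS n n (c.L n) hn1 hnN hn1 hnN le_rfl
      · exact (c.hSV n (c.L n) n b hn1 hnN le_rfl hn1 hnN hb.1 hb.2).symm
  by_cases hN1 : n + 1 ≤ c.N
  · rw [if_pos hN1]
    have hact : c.act (n + 1 - 1) = c.S n (c.L n) := by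
      rw [Nat.add_sub_cancel, Cascade.act, if_neg (by omega)]
    have hinner_n1 : ∑ j ∈ Finset.Icc 1 (c.L (n + 1)), blk c k (n + 1) j (c.S n (c.L n)) =
        ∑ j ∈ Finset.Icc 1 (c.L (n + 1)),
          (C (-(k (n + 1) j 0)) * (X (c.S n (c.L n)) * X (c.S (n + 1) (j - 1)))
            + C (k (n + 1) j 1 + k (n + 1) j 2) * X (c.U (n + 1) j)) := by
      refine Finset.sum_congr rfl fun b hb => ?_
      rw [Finset.mem_Icc] at hb
      have e1 : c.U (n + 1) b ≠ c.S n (c.L n) :=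
        (c.hSU n (c.L n) (n + 1) b hn1 hnN le_rfl (by omega) hN1 hb.1 hb.2).symm
      have e3 : c.S (n + 1) (b - 1) ≠ c.S n (c.L n) := by
        intro hEq
        have := c.hSinj (n + 1) (b - 1) n (c.L n) (by omega) hN1 (by omega) hn1 hnN le_rfl hEq
        omega
      have e4 : c.S (n + 1) b ≠ c.S n (c.L n) := by
        intro hEq
        have := c.hSinj (n + 1) b n (c.L n) (by omega) hN1 hb.2 hn1 hnN le_rfl hEq
        omega
      have e5 : c.F (n + 1) ≠ c.S n (c.L n) :=
        c.hFS (n + 1) n (c.L n) (by omega) hN1 hn1 hnN le_rfl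
      have e6 : c.V (n + 1) b ≠ c.S n (c.L n) :=
        (c.hSV n (c.L n) (n + 1) b hn1 hnN le_rfl (by omega) hN1 hb.1 hb.2).symm
      simp only [blk, hact, ind, if_neg e1, if_neg e3, if_neg e4, if_neg e5, if_neg e6,
        eq_self_iff_true, if_true, sub_zero, zero_add, zero_sub, add_zero, mul_neg_one,
        mul_one, mul_zero, map_zero, zero_mul, map_neg, map_add, neg_add]
      ring
    have hsub : ({n, n + 1} : Finset ℕ) ⊆ Finset.Icc 1 c.N := by
      intro a ha
      simp only [Finset.mem_insert, Finset.mem_singleton] at ha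
      rw [Finset.mem_Icc]; omega
    rw [← Finset.sum_subset hsub (fun a ha hna => by
      simp only [Finset.mem_insert, Finset.mem_singleton] at hna
      push_neg at hna
      exact hzero a ha hna.1 hna.2)]
    rw [Finset.sum_insert (by simp), Finset.sum_singleton, hinner_n, hinner_n1]
    ring
  · rw [if_neg hN1]
    rw [Finset.sum_eq_single_of_mem n (Finset.mem_Icc.mpr ⟨hn1, hnN⟩)
      (fun a ha hane => hzero a ha hane (by rw [Finset.mem_Icc] at ha; omega)), hinner_n]
    ring


lemma coeff_C_mul_XX {ρ : σ →₀ ℕ} {r : ℝ} {a b : σ}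
    (h : coeff ρ (C r * (X a * X b)) ≠ 0) :
    ρ = Finsupp.single a 1 + Finsupp.single b 1 := by
  rw [coeff_C_mul] at h
  have h2 : coeff ρ (X a * X b : MvPolynomial σ ℝ) ≠ 0 := fun h0 => h (mul_eq_zero_of_right r h0)
  obtain ⟨μ, ν, hadd, ha, hb⟩ := coeff_mul_ne_zero h2
  rw [coeff_X'] at ha hb
  split_ifs at ha with hA
  · split_ifs at hb with hB
    · rw [← hadd, ← hA, ← hB]
    · exact absurd rfl hb
  · exact absurd rfl ha

lemma coeff_C_mul_X {ρ : σ →₀ ℕ} {r : ℝ} {a : σ}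
    (h : coeff ρ (C r * X a) ≠ 0) : ρ = Finsupp.single a 1 := by
  rw [coeff_C_mul] at h
  have h2 : coeff ρ (X a : MvPolynomial σ ℝ) ≠ 0 := fun h0 => h (mul_eq_zero_of_right r h0)
  rw [coeff_X'] at h2
  split_ifs at h2 with hEq
  · exact hEq.symm
  · exact absurd rfl h2

lemma rhs_support_cases (c : Cascade σ) (k : ℕ → ℕ → Fin 6 → ℝ) (x : σ) {ρ : σ →₀ ℕ}
    (h : coeff ρ (c.rhs k x) ≠ 0) :
    ∃ m j, 1 ≤ m ∧ m ≤ c.N ∧ 1 ≤ j ∧ j ≤ c.L m ∧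
      (ρ = Finsupp.single (c.act (m - 1)) 1 + Finsupp.single (c.S m (j - 1)) 1 ∨
       ρ = Finsupp.single (c.U m j) 1 ∨
       ρ = Finsupp.single (c.F m) 1 + Finsupp.single (c.S m j) 1 ∨
       ρ = Finsupp.single (c.V m j) 1) := by
  rw [rhs_def', coeff_sum] at h
  obtain ⟨m, hm, h⟩ := Finset.exists_ne_zero_of_sum_ne_zero h
  rw [coeff_sum] at h
  obtain ⟨j, hj, h⟩ := Finset.exists_ne_zero_of_sum_ne_zero h
  rw [Finset.mem_Icc] at hm hj
  refine ⟨m, j, hm.1, hm.2, hj.1, hj.2, ?_⟩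
  rw [blk] at h
  simp only [coeff_add] at h
  by_contra hcon
  push_neg at hcon
  obtain ⟨hc1, hc2, hc3, hc4⟩ := hcon
  have z1 : ∀ r : ℝ, coeff ρ (C r * (X (c.act (m - 1)) * X (c.S m (j - 1)))) = 0 := by
    intro r; by_contra hz; exact hc1 (coeff_C_mul_XX hz)
  have z2 : ∀ r : ℝ, coeff ρ (C r * X (c.U m j)) = 0 := by
    intro r; by_contra hz; exact hc2 (coeff_C_mul_X hz)
  have z3 : ∀ r : ℝ, coeff ρ (C r * (X (c.F m) * X (c.S m j))) = 0 := by
    intro r; by_contra hz; exact hc3 (coeff_C_mul_XX hz)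
  have z4 : ∀ r : ℝ, coeff ρ (C r * X (c.V m j)) = 0 := by
    intro r; by_contra hz; exact hc4 (coeff_C_mul_X hz)
  rw [z1, z2, z2, z3, z4, z4] at h
  simp at h

lemma rhs_Phi (c : Cascade σ) (k : ℕ → ℕ → Fin 6 → ℝ) (ω : σ → ℝ)
    (hpairs : ∀ m j, 1 ≤ m → m ≤ c.N → 1 ≤ j → j ≤ c.L m →
      1 ≤ ω (c.act (m - 1)) + ω (c.S m (j - 1)) ∧ 1 ≤ ω (c.F m) + ω (c.S m j) ∧
        ω (c.U m j) = 1 ∧ ω (c.V m j) = 1) :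
    ∀ x ρ, coeff ρ (c.rhs k x) ≠ 0 → 1 ≤ Phi ω ρ := by
  intro x ρ h
  obtain ⟨m, j, hm1, hmN, hj1, hjL, hcases⟩ := c.rhs_support_cases k x h
  obtain ⟨hp1, hp2, hp3, hp4⟩ := hpairs m j hm1 hmN hj1 hjL
  rcases hcases with h | h | h | h <;> rw [h]
  · rw [Phi_add, Phi_single, Phi_single]; exact hp1
  · rw [Phi_single, hp3]
  · rw [Phi_add, Phi_single, Phi_single]; exact hp2
  · rw [Phi_single, hp4]


-- extra machinery
lemma lieD_X (f : σ → MvPolynomial σ ℝ) (y : σ) : lieD f (X y) = f y := by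
  rw [lieD, Finset.sum_eq_single y]
  · rw [pderiv_X_self, one_mul]
  · intro b _ hb
    rw [pderiv_X, Pi.single_eq_of_ne (Ne.symm hb), zero_mul]
  · intro hy; exact absurd (Finset.mem_univ y) hy

lemma Phi_zero (ω : σ → ℝ) : Phi ω 0 = 0 := Finsupp.sum_zero_index

lemma Phi_sum_single (ω : σ → ℝ) {α : Type*} (t : Finset α) (g : α → σ) :
    Phi ω (∑ a ∈ t, Finsupp.single (g a) 1) = ∑ a ∈ t, ω (g a) := by
  classical
  induction t using Finset.induction with
  | empty => simp [Phi_zero]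
  | insert _ _ hnot ih =>
    rw [Finset.sum_insert hnot, Phi_add, Phi_single, ih, Finset.sum_insert hnot]

lemma reacts_symm (c : Cascade σ) {x y : σ} (h : c.reactsWith x y) : c.reactsWith y x := by
  obtain ⟨m, j, h1, h2, h3, h4, h5⟩ := h
  exact ⟨m, j, h1, h2, h3, h4, by tauto⟩

lemma reacts_ne (c : Cascade σ) {x y : σ} (h : c.reactsWith x y) : x ≠ y := by
  obtain ⟨m, j, h1, h2, h3, h4, h5⟩ := h
  have hFSne : c.F m ≠ c.S m j := c.hFS m m j h1 h2 h1 h2 h4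
  have hactne : c.act (m - 1) ≠ c.S m (j - 1) := by
    intro hEq
    have := c.act_eq_S h1 h2 h1 h2 (by omega) hEq
    omega
  rcases h5 with ⟨ha, hb⟩ | ⟨ha, hb⟩ | ⟨ha, hb⟩ | ⟨ha, hb⟩
  · rw [ha, hb]; exact hactne
  · rw [ha, hb]; exact hactne.symm
  · rw [ha, hb]; exact hFSne
  · rw [ha, hb]; exact hFSne.symm

/-- Variables allowed in `ℳ` (lower-layer non-intermediates and `E`). -/
def LowVar (c : Cascade σ) (n : ℕ) (x : σ) : Prop :=
  x = c.E ∨ ∃ kk, 1 ≤ kk ∧ kk ≤ n - 1 ∧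
    (x = c.F kk ∨ ∃ j', j' ≤ c.L kk ∧ x = c.S kk j')

lemma lowVar_ne_U (c : Cascade σ) {n : ℕ} (hnN : n ≤ c.N) {x : σ} (hx : c.LowVar n x)
    {m j : ℕ} (hm1 : 1 ≤ m) (hmN : m ≤ c.N) (hj1 : 1 ≤ j) (hjL : j ≤ c.L m) :
    x ≠ c.U m j := by
  rcases hx with h | ⟨kk, hk1, hk2, h | ⟨j', hj', h⟩⟩ <;> rw [h]
  · exact c.hEU m j hm1 hmN hj1 hjL
  · exact c.hFU kk m j hk1 (by omega) hm1 hmN hj1 hjL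
  · exact c.hSU kk j' m j hk1 (by omega) hj' hm1 hmN hj1 hjL

lemma lowVar_ne_V (c : Cascade σ) {n : ℕ} (hnN : n ≤ c.N) {x : σ} (hx : c.LowVar n x)
    {m j : ℕ} (hm1 : 1 ≤ m) (hmN : m ≤ c.N) (hj1 : 1 ≤ j) (hjL : j ≤ c.L m) :
    x ≠ c.V m j := by
  rcases hx with h | ⟨kk, hk1, hk2, h | ⟨j', hj', h⟩⟩ <;> rw [h]
  · exact c.hEV m j hm1 hmN hj1 hjL
  · exact c.hFV kk m j hk1 (by omega) hm1 hmN hj1 hjL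
  · exact c.hSV kk j' m j hk1 (by omega) hj' hm1 hmN hj1 hjL

lemma lowVar_ne_S (c : Cascade σ) {n : ℕ} (hn1 : 1 ≤ n) (hnN : n ≤ c.N) {x : σ}
    (hx : c.LowVar n x) {m j : ℕ} (hmn : n ≤ m) (hmN : m ≤ c.N) (hjL : j ≤ c.L m) :
    x ≠ c.S m j := by
  rcases hx with h | ⟨kk, hk1, hk2, h | ⟨j', hj', h⟩⟩ <;> rw [h]
  · exact c.hES m j (by omega) hmN hjL
  · exact c.hFS kk m j hk1 (by omega) (by omega) hmN hjL
  · intro hEq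
    have := c.hSinj kk j' m j hk1 (by omega) hj' (by omega) hmN hjL hEq
    omega

lemma lowVar_ne_F (c : Cascade σ) {n : ℕ} (hn1 : 1 ≤ n) (hnN : n ≤ c.N) {x : σ}
    (hx : c.LowVar n x) {m : ℕ} (hmn : n ≤ m) (hmN : m ≤ c.N) : x ≠ c.F m := by
  rcases hx with h | ⟨kk, hk1, hk2, h | ⟨j', hj', h⟩⟩ <;> rw [h]
  · exact c.hEF m (by omega) hmN
  · intro hEq
    have := c.hFinj kk m hk1 (by omega) (by omega) hmN hEq
    omega
  · exact (c.hFS m kk j' (by omega) hmN hk1 (by omega) hj').symm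

/-- In `Z ∪ {sL1}`, the only reacting partner of `sL1 = S n (L n - 1)` is `act (n-1)`. -/
lemma partner_sL1 (c : Cascade σ) {n : ℕ} (hn1 : 1 ≤ n) (hnN : n ≤ c.N) {y : σ}
    (hy : c.LowVar n y) (h : c.reactsWith (c.S n (c.L n - 1)) y) : y = c.act (n - 1) := by
  have hL := c.Lpos n hn1 hnN
  obtain ⟨m, j, h1, h2, h3, h4, h5⟩ := h
  rcases h5 with ⟨ha, hb⟩ | ⟨ha, hb⟩ | ⟨ha, hb⟩ | ⟨ha, hb⟩
  · -- sL1 = act (m-1): impossible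
    exfalso
    have := c.act_eq_S h1 h2 hn1 hnN (by omega) ha.symm
    omega
  · -- sL1 = S m (j-1), y = act (m-1): then m = n
    have := c.hSinj m (j - 1) n (c.L n - 1) h1 h2 (by omega) hn1 hnN (by omega) hb.symm
    rw [ha, this.1]
  · -- sL1 = F m: impossible
    exact absurd ha.symm (c.hFS m n (c.L n - 1) h1 h2 hn1 hnN (by omega))
  · -- y = F m, sL1 = S m j : then m = n, y = F n ∈ Z: impossible
    exfalso
    have := c.hSinj m j n (c.L n - 1) h1 h2 h4 hn1 hnN (by omega) hb.symm
    exact (c.lowVar_ne_F hn1 hnN hy (m := n) le_rfl hnN) (by rw [ha, this.1])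

lemma mem_of_meets {α : Type*} {g h x₀ y₀ z₁ : α} (d1 : x₀ ≠ y₀) (d2 : x₀ ≠ z₁) (d3 : y₀ ≠ z₁)
    (m1 : g = x₀ ∨ g = y₀ ∨ h = x₀ ∨ h = y₀)
    (m2 : g = y₀ ∨ g = z₁ ∨ h = y₀ ∨ h = z₁)
    (m3 : g = x₀ ∨ g = z₁ ∨ h = x₀ ∨ h = z₁) :
    (g = x₀ ∨ g = y₀ ∨ g = z₁) ∧ (h = x₀ ∨ h = y₀ ∨ h = z₁) := by
  rcases m1 with h1 | h1 | h1 | h1 <;> rcases m2 with h2 | h2 | h2 | h2 <;>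
    rcases m3 with h3 | h3 | h3 | h3 <;> subst_vars <;> tauto

lemma sum_ite_le {M : ℕ} {z : Fin M → σ} (hinj : Function.Injective z) (t : σ) {r : ℝ}
    (hr : 0 ≤ r) [∀ jj, Decidable (z jj = t)] :
    ∑ jj : Fin M, (if z jj = t then r else 0) ≤ r := by
  by_cases h : ∃ j₀, z j₀ = t
  · obtain ⟨j₀, hj₀⟩ := h
    rw [Finset.sum_eq_single j₀ (fun b _ hb => if_neg fun hEq => hb (hinj (by rw [hEq, hj₀])))
      (fun h => absurd (Finset.mem_univ _) h), if_pos hj₀]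
  · push_neg at h
    rw [Finset.sum_eq_zero fun b _ => if_neg (h b)]
    exact hr

lemma sum_ite_eq_r {M : ℕ} {z : Fin M → σ} (hinj : Function.Injective z) {t : σ} (j₀ : Fin M)
    (hj₀ : z j₀ = t) (r : ℝ) [∀ jj, Decidable (z jj = t)] :
    ∑ jj : Fin M, (if z jj = t then r else 0) = r := by
  rw [Finset.sum_eq_single j₀ (fun b _ hb => if_neg fun hEq => hb (hinj (by rw [hEq, hj₀])))
    (fun h => absurd (Finset.mem_univ _) h), if_pos hj₀]

lemma exists_weight (c : Cascade σ) {n : ℕ} (hn1 : 1 ≤ n) (hnN : n ≤ c.N)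
    {M : ℕ} {z : Fin M → σ} (hlow : ∀ jj, c.LowVar n (z jj))
    (hsqfree : Function.Injective z)
    (hnopairs : ¬ ∃ j₁ j₂ j₃ j₄ : Fin M,
      j₁ ≠ j₂ ∧ j₁ ≠ j₃ ∧ j₁ ≠ j₄ ∧ j₂ ≠ j₃ ∧ j₂ ≠ j₄ ∧ j₃ ≠ j₄ ∧
      c.reactsWith (z j₁) (z j₂) ∧ c.reactsWith (z j₃) (z j₄))
    (hdvd : (∃ jj, z jj = c.act (n - 1)) → ∀ j₁ j₂ : Fin M,
      c.reactsWith (z j₁) (z j₂) → z j₁ = c.act (n - 1) ∨ z j₂ = c.act (n - 1)) :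
    ∃ ω : σ → ℝ, (∀ x, 0 ≤ ω x) ∧ (∀ x, ω x ≤ 1) ∧
      (∀ x, (¬ ∃ jj, z jj = x) → x ≠ c.S n (c.L n - 1) → ω x = 1) ∧
      (∀ x y, c.reactsWith x y → 1 ≤ ω x + ω y) ∧
      (ω (c.S n (c.L n - 1)) + ∑ jj, ω (z jj) < 2) ∧
      ((∃ jj, z jj = c.act (n - 1)) →
        ω (c.S n (c.L n - 1)) + ∑ jj, ω (z jj) < 1 + ω (c.act (n - 1))) := by
  classical
  have hL := c.Lpos n hn1 hnN
  set sL1 := c.S n (c.L n - 1) with hsL1def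
  set e := c.act (n - 1) with hedef
  have hsL1Z : ¬ ∃ jj, z jj = sL1 := by
    rintro ⟨jj, hjj⟩
    exact c.lowVar_ne_S hn1 hnN (hlow jj) le_rfl hnN (by omega) hjj
  have hesL1 : e ≠ sL1 := by
    rcases c.act_spec hn1 with ⟨_, he⟩ | ⟨h2, he⟩ <;> rw [hedef, he]
    · exact c.hES n (c.L n - 1) hn1 hnN (by omega)
    · intro hEq
      have := c.hSinj (n - 1) (c.L (n - 1)) n (c.L n - 1) (by omega) (by omega) le_rfl
        hn1 hnN (by omega) hEq
      omega
  have key : ∀ x y, c.reactsWith x y → ((∃ p, z p = x) ∨ x = sL1) →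
      ((∃ q, z q = y) ∨ y = sL1) →
      ((∃ p, z p = x) ∧ (∃ q, z q = y)) ∨ (x = sL1 ∧ y = e) ∨ (y = sL1 ∧ x = e) := by
    intro x y hr hx hy
    rcases hx with hx | hx
    · rcases hy with hy | hy
      · exact Or.inl ⟨hx, hy⟩
      · right; right
        refine ⟨hy, ?_⟩
        subst hy
        obtain ⟨p, hp⟩ := hx
        exact c.partner_sL1 hn1 hnN (hp ▸ hlow p) (c.reacts_symm hr)
    · subst hx
      rcases hy with hy | hy
      · obtain ⟨q, hq⟩ := hy
        exact Or.inr (Or.inl ⟨rfl, c.partner_sL1 hn1 hnN (hq ▸ hlow q) hr⟩)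
      · exact absurd hy.symm (c.reacts_ne hr)
  by_cases hcase : ∃ jj, z jj = e
  · -- Case 1: e occurs in ℳ; all reacting pairs inside touch e
    refine ⟨fun x => if x = e then 1 else if (∃ jj, z jj = x) ∨ x = sL1 then 0 else 1,
      ?_, ?_, ?_, ?_, ?_, ?_⟩
    · intro x; dsimp only; split_ifs <;> norm_num
    · intro x; dsimp only; split_ifs <;> norm_num
    · intro x hxZ hxs
      dsimp only
      rw [if_neg, if_neg]
      · rintro (h | h); exacts [hxZ h, hxs h]
      · intro hx; exact hcase.elim fun jj hjj => hxZ ⟨jj, hx ▸ hjj⟩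
    · intro x y hr
      dsimp only
      have hnn : ∀ t : σ, (0:ℝ) ≤ if t = e then 1 else if (∃ jj, z jj = t) ∨ t = sL1 then 0 else 1 := by
        intro t; split_ifs <;> norm_num
      have hout : ∀ t : σ, ¬((∃ jj, z jj = t) ∨ t = sL1) →
          (if t = e then (1:ℝ) else if (∃ jj, z jj = t) ∨ t = sL1 then 0 else 1) = 1 := by
        intro t ht
        by_cases hte : t = e
        · rw [if_pos hte]
        · rw [if_neg hte, if_neg ht]
      by_cases hx : (∃ p, z p = x) ∨ x = sL1
      · by_cases hy : (∃ q, z q = y) ∨ y = sL1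
        · have hone : x = e ∨ y = e := by
            rcases key x y hr hx hy with ⟨⟨p, hp⟩, ⟨q, hq⟩⟩ | ⟨_, hye⟩ | ⟨_, hxe⟩
            · rcases hdvd hcase p q (by rw [hp, hq]; exact hr) with h | h
              · exact Or.inl (by rw [← hp, h])
              · exact Or.inr (by rw [← hq, h])
            · exact Or.inr hye
            · exact Or.inl hxe
          rcases hone with h | h
          · rw [if_pos h]; have := hnn y; linarith
          · rw [if_pos h]; have := hnn x; linarith
        · rw [hout y hy]; have := hnn x; linarith
      · rw [hout x hx]; have := hnn y; linarith
    · dsimp only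
      have h1 : (if sL1 = e then (1:ℝ) else if (∃ jj, z jj = sL1) ∨ sL1 = sL1 then 0 else 1) = 0 := by
        rw [if_neg (Ne.symm hesL1), if_pos (Or.inr rfl)]
      rw [h1]
      have h2 : ∀ jj, (if z jj = e then (1:ℝ) else if (∃ p, z p = z jj) ∨ z jj = sL1 then 0 else 1)
          = if z jj = e then 1 else 0 := by
        intro jj
        split_ifs with ha hb
        · rfl
        · rfl
        · exact absurd (Or.inl ⟨jj, rfl⟩) hb
      rw [Finset.sum_congr rfl (fun jj _ => h2 jj)]
      obtain ⟨j₀, hj₀⟩ := hcase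
      rw [sum_ite_eq_r hsqfree j₀ hj₀ 1]
      norm_num
    · intro _
      dsimp only
      have h1 : (if e = e then (1:ℝ) else if (∃ jj, z jj = e) ∨ e = sL1 then 0 else 1) = 1 :=
        if_pos rfl
      rw [h1]
      have h0 : (if sL1 = e then (1:ℝ) else if (∃ jj, z jj = sL1) ∨ sL1 = sL1 then 0 else 1) = 0 := by
        rw [if_neg (Ne.symm hesL1), if_pos (Or.inr rfl)]
      rw [h0]
      have h2 : ∀ jj, (if z jj = e then (1:ℝ) else if (∃ p, z p = z jj) ∨ z jj = sL1 then 0 else 1)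
          = if z jj = e then 1 else 0 := by
        intro jj
        split_ifs with ha hb
        · rfl
        · rfl
        · exact absurd (Or.inl ⟨jj, rfl⟩) hb
      rw [Finset.sum_congr rfl (fun jj _ => h2 jj)]
      obtain ⟨j₀, hj₀⟩ := hcase
      rw [sum_ite_eq_r hsqfree j₀ hj₀ 1]
      norm_num
  · -- Case 2: e does not occur in ℳ
    have keyB : ∀ x y, c.reactsWith x y → ((∃ p, z p = x) ∨ x = sL1) →
        ((∃ q, z q = y) ∨ y = sL1) → (∃ p, z p = x) ∧ (∃ q, z q = y) := by
      intro x y hr hx hy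
      rcases key x y hr hx hy with h | ⟨_, hye⟩ | ⟨_, hxe⟩
      · exact h
      · exfalso
        rcases hy with hy | hy
        · exact hcase (hye ▸ hy)
        · exact hesL1 (hye ▸ hy)
      · exfalso
        rcases hx with hx | hx
        · exact hcase (hxe ▸ hx)
        · exact hesL1 (hxe ▸ hx)
    by_cases hedge : ∃ x y, c.reactsWith x y ∧ (∃ p, z p = x) ∧ (∃ q, z q = y)
    · obtain ⟨x₀, y₀, hr0, hZx0, hZy0⟩ := hedge
      have hmeet : ∀ x y x' y', c.reactsWith x y → (∃ p, z p = x) → (∃ q, z q = y) →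
          c.reactsWith x' y' → (∃ p, z p = x') → (∃ q, z q = y') →
          x = x' ∨ x = y' ∨ y = x' ∨ y = y' := by
        intro x y x' y' hxy hZx hZy hxy' hZx' hZy'
        by_contra hc
        push_neg at hc
        obtain ⟨hc1, hc2, hc3, hc4⟩ := hc
        obtain ⟨p, hp⟩ := hZx
        obtain ⟨q, hq⟩ := hZy
        obtain ⟨r, hr⟩ := hZx'
        obtain ⟨s, hs⟩ := hZy'
        have hxyne : x ≠ y := c.reacts_ne hxy
        have hxyne' : x' ≠ y' := c.reacts_ne hxy'
        refine hnopairs ⟨p, q, r, s, ?_, ?_, ?_, ?_, ?_, ?_, ?_, ?_⟩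
        · exact fun h => hxyne (by rw [← hp, ← hq, h])
        · exact fun h => hc1 (by rw [← hp, ← hr, h])
        · exact fun h => hc2 (by rw [← hp, ← hs, h])
        · exact fun h => hc3 (by rw [← hq, ← hr, h])
        · exact fun h => hc4 (by rw [← hq, ← hs, h])
        · exact fun h => hxyne' (by rw [← hr, ← hs, h])
        · rw [hp, hq]; exact hxy
        · rw [hr, hs]; exact hxy'
      by_cases huniv : ∃ h₀, ∀ x y, c.reactsWith x y → (∃ p, z p = x) → (∃ q, z q = y) →
          x = h₀ ∨ y = h₀
      · obtain ⟨h₀, hh₀⟩ := huniv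
        have hZh₀ : ∃ p, z p = h₀ := by
          rcases hh₀ x₀ y₀ hr0 hZx0 hZy0 with h | h
          · exact h ▸ hZx0
          · exact h ▸ hZy0
        have hsh₀ : sL1 ≠ h₀ := fun h => hsL1Z (h ▸ hZh₀)
        refine ⟨fun x => if x = h₀ then 1 else if (∃ jj, z jj = x) ∨ x = sL1 then 0 else 1,
          ?_, ?_, ?_, ?_, ?_, fun h => absurd h hcase⟩
        · intro x; dsimp only; split_ifs <;> norm_num
        · intro x; dsimp only; split_ifs <;> norm_num
        · intro x hxZ hxs
          dsimp only
          rw [if_neg, if_neg]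
          · rintro (h | h); exacts [hxZ h, hxs h]
          · intro hx; exact hxZ (hx ▸ hZh₀)
        · intro x y hr
          dsimp only
          have hnn : ∀ t : σ, (0:ℝ) ≤ if t = h₀ then 1 else
              if (∃ jj, z jj = t) ∨ t = sL1 then 0 else 1 := by
            intro t; split_ifs <;> norm_num
          have hout : ∀ t : σ, ¬((∃ jj, z jj = t) ∨ t = sL1) →
              (if t = h₀ then (1:ℝ) else if (∃ jj, z jj = t) ∨ t = sL1 then 0 else 1) = 1 := by
            intro t ht
            by_cases hth : t = h₀
            · rw [if_pos hth]
            · rw [if_neg hth, if_neg ht]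
          by_cases hx : (∃ p, z p = x) ∨ x = sL1
          · by_cases hy : (∃ q, z q = y) ∨ y = sL1
            · obtain ⟨hZx, hZy⟩ := keyB x y hr hx hy
              rcases hh₀ x y hr hZx hZy with h | h
              · rw [if_pos h]; have := hnn y; linarith
              · rw [if_pos h]; have := hnn x; linarith
            · rw [hout y hy]; have := hnn x; linarith
          · rw [hout x hx]; have := hnn y; linarith
        · dsimp only
          have h1 : (if sL1 = h₀ then (1:ℝ)
              else if (∃ jj, z jj = sL1) ∨ sL1 = sL1 then 0 else 1) = 0 := by
            rw [if_neg hsh₀, if_pos (Or.inr rfl)]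
          rw [h1]
          have h2 : ∀ jj, (if z jj = h₀ then (1:ℝ)
              else if (∃ p, z p = z jj) ∨ z jj = sL1 then 0 else 1) =
              if z jj = h₀ then 1 else 0 := by
            intro jj
            split_ifs with ha hb
            · rfl
            · rfl
            · exact absurd (Or.inl ⟨jj, rfl⟩) hb
          rw [Finset.sum_congr rfl (fun jj _ => h2 jj)]
          have := sum_ite_le hsqfree h₀ (le_of_lt one_pos) (z := z)
          linarith
      · -- no universal vertex: triangle case
        push_neg at huniv
        obtain ⟨u, v, hruv, hZu, hZv, hux0, hvx0⟩ := huniv x₀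
        have h1 := hmeet u v x₀ y₀ hruv hZu hZv hr0 hZx0 hZy0
        have hedge1 : ∃ z₁, c.reactsWith y₀ z₁ ∧ (∃ p, z p = z₁) ∧ z₁ ≠ x₀ ∧ z₁ ≠ y₀ := by
          rcases h1 with h | h | h | h
          · exact absurd h hux0
          · exact ⟨v, by rw [← h]; exact hruv, hZv, hvx0,
              fun hEq => (c.reacts_ne hruv) (by rw [h, hEq])⟩
          · exact absurd h hvx0
          · exact ⟨u, by rw [← h]; exact c.reacts_symm hruv, hZu, hux0,
              fun hEq => (c.reacts_ne hruv) (by rw [hEq, h])⟩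
        obtain ⟨z₁, hf₁, hZz₁, hz₁x₀, hz₁y₀⟩ := hedge1
        obtain ⟨u', v', hruv', hZu', hZv', huy0, hvy0⟩ := huniv y₀
        have h2 := hmeet u' v' x₀ y₀ hruv' hZu' hZv' hr0 hZx0 hZy0
        have hedge2 : ∃ w, c.reactsWith x₀ w ∧ (∃ p, z p = w) ∧ w ≠ y₀ ∧ w ≠ x₀ := by
          rcases h2 with h | h | h | h
          · exact ⟨v', by rw [← h]; exact hruv', hZv', hvy0,
              fun hEq => (c.reacts_ne hruv') (by rw [h, hEq])⟩
          · exact absurd h huy0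
          · exact ⟨u', by rw [← h]; exact c.reacts_symm hruv', hZu', huy0,
              fun hEq => (c.reacts_ne hruv') (by rw [hEq, h])⟩
          · exact absurd h hvy0
        obtain ⟨w, hf₂, hZw, hwy₀, hwx₀⟩ := hedge2
        have hxy : x₀ ≠ y₀ := c.reacts_ne hr0
        have hw : w = z₁ := by
          rcases hmeet x₀ w y₀ z₁ hf₂ hZx0 hZw hf₁ hZy0 hZz₁ with h | h | h | h
          · exact absurd h hxy
          · exact absurd h (Ne.symm hz₁x₀)
          · exact absurd h hwy₀
          · exact h
        subst hw
        have dxz : x₀ ≠ w := Ne.symm hz₁x₀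
        have dyz : y₀ ≠ w := Ne.symm hz₁y₀
        have hT : ∀ g h', c.reactsWith g h' → (∃ p, z p = g) → (∃ q, z q = h') →
            (g = x₀ ∨ g = y₀ ∨ g = w) ∧ (h' = x₀ ∨ h' = y₀ ∨ h' = w) := by
          intro g h' hgh hZg hZh
          exact mem_of_meets hxy dxz dyz
            (hmeet g h' x₀ y₀ hgh hZg hZh hr0 hZx0 hZy0)
            (hmeet g h' y₀ w hgh hZg hZh hf₁ hZy0 hZz₁)
            (hmeet g h' x₀ w hgh hZg hZh hf₂ hZx0 hZz₁)
        have hsT : ¬(sL1 = x₀ ∨ sL1 = y₀ ∨ sL1 = w) := by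
          rintro (h | h | h)
          · exact hsL1Z (h ▸ hZx0)
          · exact hsL1Z (h ▸ hZy0)
          · exact hsL1Z (h ▸ hZz₁)
        refine ⟨fun x => if x = x₀ ∨ x = y₀ ∨ x = w then 1/2
            else if (∃ jj, z jj = x) ∨ x = sL1 then 0 else 1,
          ?_, ?_, ?_, ?_, ?_, fun h => absurd h hcase⟩
        · intro x; dsimp only; split_ifs <;> norm_num
        · intro x; dsimp only; split_ifs <;> norm_num
        · intro x hxZ hxs
          dsimp only
          rw [if_neg, if_neg]
          · rintro (h | h); exacts [hxZ h, hxs h]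
          · rintro (h | h | h)
            · exact hxZ (h ▸ hZx0)
            · exact hxZ (h ▸ hZy0)
            · exact hxZ (h ▸ hZz₁)
        · intro x y hr
          dsimp only
          have hnn : ∀ t : σ, (0:ℝ) ≤ if t = x₀ ∨ t = y₀ ∨ t = w then 1/2
              else if (∃ jj, z jj = t) ∨ t = sL1 then 0 else 1 := by
            intro t; split_ifs <;> norm_num
          have hout : ∀ t : σ, ¬((∃ jj, z jj = t) ∨ t = sL1) →
              (if t = x₀ ∨ t = y₀ ∨ t = w then (1:ℝ)/2
                else if (∃ jj, z jj = t) ∨ t = sL1 then 0 else 1) = 1 := by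
            intro t ht
            rw [if_neg, if_neg ht]
            rintro (h | h | h)
            · exact ht (Or.inl (h ▸ hZx0))
            · exact ht (Or.inl (h ▸ hZy0))
            · exact ht (Or.inl (h ▸ hZz₁))
          by_cases hx : (∃ p, z p = x) ∨ x = sL1
          · by_cases hy : (∃ q, z q = y) ∨ y = sL1
            · obtain ⟨hZx, hZy⟩ := keyB x y hr hx hy
              obtain ⟨hgT, hhT⟩ := hT x y hr hZx hZy
              rw [if_pos hgT, if_pos hhT]
              norm_num
            · rw [hout y hy]; have := hnn x; linarith
          · rw [hout x hx]; have := hnn y; linarith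
        · dsimp only
          have h1 : (if sL1 = x₀ ∨ sL1 = y₀ ∨ sL1 = w then (1:ℝ)/2
              else if (∃ jj, z jj = sL1) ∨ sL1 = sL1 then 0 else 1) = 0 := by
            rw [if_neg hsT, if_pos (Or.inr rfl)]
          rw [h1]
          have h2 : ∀ jj, (if z jj = x₀ ∨ z jj = y₀ ∨ z jj = w then (1:ℝ)/2
              else if (∃ p, z p = z jj) ∨ z jj = sL1 then 0 else 1) ≤
              (if z jj = x₀ then 1/2 else 0) + (if z jj = y₀ then 1/2 else 0)
                + (if z jj = w then 1/2 else 0) := by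
            intro jj
            by_cases h : z jj = x₀ ∨ z jj = y₀ ∨ z jj = w
            · rw [if_pos h]
              rcases h with h | h | h <;> rw [if_pos h] <;> split_ifs <;> norm_num
            · rw [if_neg h, if_pos (Or.inl ⟨jj, rfl⟩)]
              split_ifs <;> norm_num
          have hle := Finset.sum_le_sum (fun jj (_ : jj ∈ Finset.univ) => h2 jj)
          rw [Finset.sum_add_distrib, Finset.sum_add_distrib] at hle
          have b1 := sum_ite_le hsqfree x₀ (by norm_num : (0:ℝ) ≤ 1/2)
          have b2 := sum_ite_le hsqfree y₀ (by norm_num : (0:ℝ) ≤ 1/2)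
          have b3 := sum_ite_le hsqfree w (by norm_num : (0:ℝ) ≤ 1/2)
          linarith
    · -- no edges at all inside ℳ
      push_neg at hedge
      refine ⟨fun x => if (∃ jj, z jj = x) ∨ x = sL1 then 0 else 1,
        ?_, ?_, ?_, ?_, ?_, fun h => absurd h hcase⟩
      · intro x; dsimp only; split_ifs <;> norm_num
      · intro x; dsimp only; split_ifs <;> norm_num
      · intro x hxZ hxs
        dsimp only
        rw [if_neg]
        rintro (h | h); exacts [hxZ h, hxs h]
      · intro x y hr
        dsimp only
        by_cases hx : (∃ p, z p = x) ∨ x = sL1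
        · by_cases hy : (∃ q, z q = y) ∨ y = sL1
          · obtain ⟨hZx, hZy⟩ := keyB x y hr hx hy
            obtain ⟨q, hq⟩ := hZy
            exact absurd hq (hedge x y hr hZx q)
          · rw [if_neg hy]
            split_ifs <;> norm_num
        · rw [if_neg hx]
          split_ifs <;> norm_num
      · dsimp only
        rw [if_pos (Or.inr rfl)]
        rw [Finset.sum_eq_zero (fun jj _ => if_pos (Or.inl ⟨jj, rfl⟩))]
        norm_num


/-- **Lemma.** In the `N`-layer cascade, let `1 ≤ n ≤ N` and let `ℳ = ∏_j z j` be a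
monomial appearing in `s_{n-1,L_{n-1}}^{(ℓ₀)}` (the variable `act (n-1)`) but in no
lower-order derivative, involving only variables of species among
`{S k j, F k : 1 ≤ k ≤ n-1} ∪ {E}`. Assume `ℳ` is square-free, does not contain two
disjoint pairs of variables of species reacting together, and if `s_{n-1,L_{n-1}}`
divides `ℳ`, every reacting pair inside `ℳ` contains `s_{n-1,L_{n-1}}`. Then
`ℳ̂ = s_{n,L_n-1}·ℳ` appears in `s_{n,L_n}^{(ℓ₀+2)}` with coefficient
`c_{n,L_n}·a_{n,L_n}·C` (where `C` is the coefficient of `ℳ` in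
`s_{n-1,L_{n-1}}^{(ℓ₀)}`) and in no lower-order derivative of `s_{n,L_n}`. -/
theorem monomial_lift_nonintermediate
    (c : Cascade σ) (k : ℕ → ℕ → Fin 6 → ℝ)
    (hk : ∀ m j, 1 ≤ m → m ≤ c.N → 1 ≤ j → j ≤ c.L m → ∀ t, 0 < k m j t)
    (n : ℕ) (hn1 : 1 ≤ n) (hnN : n ≤ c.N)
    (M : ℕ) (z : Fin M → σ)
    (hvars : ∀ jj, z jj = c.E ∨ ∃ kk, 1 ≤ kk ∧ kk ≤ n - 1 ∧
      (z jj = c.F kk ∨ ∃ j', j' ≤ c.L kk ∧ z jj = c.S kk j'))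
    (ℓ₀ : ℕ)
    (happ : MvPolynomial.coeff (∑ jj, Finsupp.single (z jj) 1)
      (c.deriv k ℓ₀ (c.act (n - 1))) ≠ 0)
    (hmin : ∀ ℓ < ℓ₀, MvPolynomial.coeff (∑ jj, Finsupp.single (z jj) 1)
      (c.deriv k ℓ (c.act (n - 1))) = 0)
    (hsqfree : Function.Injective z)
    (hnopairs : ¬ ∃ j₁ j₂ j₃ j₄ : Fin M,
      j₁ ≠ j₂ ∧ j₁ ≠ j₃ ∧ j₁ ≠ j₄ ∧ j₂ ≠ j₃ ∧ j₂ ≠ j₄ ∧ j₃ ≠ j₄ ∧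
      c.reactsWith (z j₁) (z j₂) ∧ c.reactsWith (z j₃) (z j₄))
    (hdvd : (∃ jj, z jj = c.act (n - 1)) → ∀ j₁ j₂ : Fin M,
      c.reactsWith (z j₁) (z j₂) → z j₁ = c.act (n - 1) ∨ z j₂ = c.act (n - 1)) :
    MvPolynomial.coeff
        (Finsupp.single (c.S n (c.L n - 1)) 1 + ∑ jj, Finsupp.single (z jj) 1)
        (c.deriv k (ℓ₀ + 2) (c.S n (c.L n))) ≠ 0
    ∧ MvPolynomial.coeff
        (Finsupp.single (c.S n (c.L n - 1)) 1 + ∑ jj, Finsupp.single (z jj) 1)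
        (c.deriv k (ℓ₀ + 2) (c.S n (c.L n)))
      = k n (c.L n) 2 * k n (c.L n) 0 *
          MvPolynomial.coeff (∑ jj, Finsupp.single (z jj) 1)
            (c.deriv k ℓ₀ (c.act (n - 1)))
    ∧ ∀ ℓ < ℓ₀ + 2,
        MvPolynomial.coeff
          (Finsupp.single (c.S n (c.L n - 1)) 1 + ∑ jj, Finsupp.single (z jj) 1)
          (c.deriv k ℓ (c.S n (c.L n))) = 0 := by
  classical
  have hL := c.Lpos n hn1 hnN
  set Mf : σ →₀ ℕ := ∑ jj, Finsupp.single (z jj) 1 with hMfdef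
  set sL1 : σ := c.S n (c.L n - 1) with hsL1def
  set e : σ := c.act (n - 1) with hedef
  set u : σ := c.U n (c.L n) with hudef
  set s : σ := c.S n (c.L n) with hsdef
  obtain ⟨ω, hω0, hω1, hωdef, hωreact, hωd1, hωd2⟩ :=
    c.exists_weight hn1 hnN (fun jj => hvars jj) hsqfree hnopairs hdvd
  -- basic distinctness facts
  have hesL1 : e ≠ sL1 := by
    rcases c.act_spec hn1 with ⟨_, he⟩ | ⟨h2, he⟩ <;> rw [hedef, he]
    · exact c.hES n (c.L n - 1) hn1 hnN (by omega)
    · intro hEq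
      have := c.hSinj (n - 1) (c.L (n - 1)) n (c.L n - 1) (by omega) (by omega) le_rfl
        hn1 hnN (by omega) hEq
      omega
  have hssL1 : s ≠ sL1 := by
    intro hEq
    have := c.hSinj n (c.L n) n (c.L n - 1) hn1 hnN le_rfl hn1 hnN (by omega) hEq
    omega
  have husL1 : u ≠ sL1 :=
    (c.hSU n (c.L n - 1) n (c.L n) hn1 hnN (by omega) hn1 hnN hL le_rfl).symm
  have hvsL1 : c.V n (c.L n) ≠ sL1 :=
    (c.hSV n (c.L n - 1) n (c.L n) hn1 hnN (by omega) hn1 hnN hL le_rfl).symm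
  have hfsL1 : c.F n ≠ sL1 := c.hFS n n (c.L n - 1) hn1 hnN hn1 hnN (by omega)
  -- coordinates of the target monomial
  have hMf0 : ∀ x, (¬ ∃ jj, z jj = x) → Mf x = 0 := by
    intro x hx
    rw [hMfdef, Finsupp.finset_sum_apply]
    exact Finset.sum_eq_zero fun jj _ => by
      rw [Finsupp.single_apply, if_neg fun h => hx ⟨jj, h⟩]
  have hMfsL1 : Mf sL1 = 0 := by
    refine hMf0 _ ?_
    rintro ⟨jj, hjj⟩
    exact c.lowVar_ne_S hn1 hnN (hvars jj) le_rfl hnN (by omega) hjj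
  have hMhat_sL1 : ((Finsupp.single sL1 1 + Mf : σ →₀ ℕ)) sL1 = 1 := by
    rw [Finsupp.add_apply, Finsupp.single_apply, if_pos rfl, hMfsL1]
  have hsingle_ne : ∀ y : σ, y ≠ sL1 →
      coeff (Finsupp.single sL1 1 + Mf) (X y : MvPolynomial σ ℝ) = 0 := by
    intro y hy
    rw [coeff_X', if_neg]
    intro hEq
    have h1 : (Finsupp.single y 1 : σ →₀ ℕ) sL1 = ((Finsupp.single sL1 1 + Mf : σ →₀ ℕ)) sL1 := by rw [hEq]
    rw [Finsupp.single_apply, if_neg hy, hMhat_sL1] at h1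
    exact one_ne_zero h1.symm
  -- Φ facts
  have hPhiM : Phi ω (Finsupp.single sL1 1 + Mf) = ω sL1 + ∑ jj, ω (z jj) := by
    rw [Phi_add, Phi_single, hMfdef, Phi_sum_single]
  have hΦd1 : Phi ω (Finsupp.single sL1 1 + Mf) < 2 := by rw [hPhiM]; exact hωd1
  have hωs : ω s = 1 := by
    refine hωdef s ?_ hssL1
    rintro ⟨jj, hjj⟩
    exact c.lowVar_ne_S hn1 hnN (hvars jj) le_rfl hnN le_rfl hjj
  have hωf : ω (c.F n) = 1 := by
    refine hωdef _ ?_ hfsL1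
    rintro ⟨jj, hjj⟩
    exact c.lowVar_ne_F hn1 hnN (hvars jj) le_rfl hnN hjj
  have hpairs : ∀ m j, 1 ≤ m → m ≤ c.N → 1 ≤ j → j ≤ c.L m →
      1 ≤ ω (c.act (m - 1)) + ω (c.S m (j - 1)) ∧ 1 ≤ ω (c.F m) + ω (c.S m j) ∧
        ω (c.U m j) = 1 ∧ ω (c.V m j) = 1 := by
    intro m j hm1 hmN hj1 hjL
    refine ⟨hωreact _ _ ⟨m, j, hm1, hmN, hj1, hjL, Or.inl ⟨rfl, rfl⟩⟩,
      hωreact _ _ ⟨m, j, hm1, hmN, hj1, hjL, Or.inr (Or.inr (Or.inl ⟨rfl, rfl⟩))⟩,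
      hωdef _ ?_ ((c.hSU n (c.L n - 1) m j hn1 hnN (by omega) hm1 hmN hj1 hjL).symm),
      hωdef _ ?_ ((c.hSV n (c.L n - 1) m j hn1 hnN (by omega) hm1 hmN hj1 hjL).symm)⟩
    · rintro ⟨jj, hjj⟩
      exact c.lowVar_ne_U hnN (hvars jj) hm1 hmN hj1 hjL hjj
    · rintro ⟨jj, hjj⟩
      exact c.lowVar_ne_V hnN (hvars jj) hm1 hmN hj1 hjL hjj
  have hΦrhs : ∀ x ρ, coeff ρ (c.rhs k x) ≠ 0 → 1 ≤ Phi ω ρ := c.rhs_Phi k ω hpairs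
  -- vanishing lemmas
  have hVan2 : ∀ φ : MvPolynomial σ ℝ, (∀ μ, coeff μ φ ≠ 0 → 2 ≤ Phi ω μ) →
      ∀ ℓ, coeff (Finsupp.single sL1 1 + Mf) (lieDIter (c.rhs k) ℓ φ) = 0 := by
    intro φ hφ ℓ
    by_contra hc
    exact absurd (Phi_lieDIter_mono hω1 hΦrhs hφ ℓ _ hc) (by linarith)
  have hprod2 : ∀ a b : σ, ω a = 1 → ω b = 1 →
      ∀ μ, coeff μ (X a * X b : MvPolynomial σ ℝ) ≠ 0 → 2 ≤ Phi ω μ := by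
    intro a b ha hb μ hμ
    have h1 : coeff μ (C (1:ℝ) * (X a * X b)) ≠ 0 := by rwa [map_one, one_mul]
    rw [coeff_C_mul_XX h1, Phi_add, Phi_single, Phi_single, ha, hb]
    norm_num
  have hstep : ∀ (ℓ : ℕ) (y : σ),
      lieDIter (c.rhs k) (ℓ + 1) (X y) = lieDIter (c.rhs k) ℓ (c.rhs k y) := by
    intro ℓ y
    rw [lieDIter_succ', lieD_X]
  -- the GoodM exclusion at the target monomial
  have hGood_excl : ¬ GoodM ω e (Finsupp.single sL1 1 + Mf) := by
    rintro (h2 | ⟨hνe, hle⟩)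
    · linarith
    · have hZe : ∃ jj, z jj = e := by
        by_contra hne
        rw [Finsupp.add_apply, Finsupp.single_apply, if_neg hesL1.symm, hMf0 e hne] at hνe
        exact hνe rfl
      have := hωd2 hZe
      rw [hPhiM] at hle
      linarith
  -- Leibniz bookkeeping for e·sL1
  have hP : ∀ m, ∃ R, lieDIter (c.rhs k) m (X e * X sL1) =
      lieDIter (c.rhs k) m (X e) * X sL1 + R ∧ ∀ ν, coeff ν R ≠ 0 → GoodM ω e ν := by
    intro m
    induction m with
    | zero =>
      exact ⟨0, by rw [add_zero]; rfl, fun ν h => absurd (MvPolynomial.coeff_zero ν) h⟩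
    | succ m ih =>
      obtain ⟨R, hR, hG⟩ := ih
      refine ⟨lieDIter (c.rhs k) m (X e) * c.rhs k sL1 + lieD (c.rhs k) R, ?_, ?_⟩
      · show lieD (c.rhs k) (lieDIter (c.rhs k) m (X e * X sL1)) = _
        rw [hR, lieD_add, lieD_mul, lieD_X]
        show _ = lieD (c.rhs k) (lieDIter (c.rhs k) m (X e)) * X sL1 + _
        ring
      · intro ν hν
        rw [coeff_add] at hν
        by_cases h1 : coeff ν (lieDIter (c.rhs k) m (X e) * c.rhs k sL1) = 0
        · rw [h1, zero_add] at hν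
          exact GoodM_lieD hω1 hΦrhs hG ν hν
        · obtain ⟨μ, ρ, hadd, hμ, hρ⟩ := coeff_mul_ne_zero h1
          have hΦρ : 1 ≤ Phi ω ρ := hΦrhs _ _ hρ
          cases m with
          | zero =>
            have hμe : μ = Finsupp.single e 1 := by
              have hμ' : coeff μ (X e : MvPolynomial σ ℝ) ≠ 0 := hμ
              rw [coeff_X'] at hμ'
              split_ifs at hμ' with hEq
              · exact hEq.symm
              · exact absurd rfl hμ'
            right
            constructor
            · rw [← hadd, hμe, Finsupp.add_apply, Finsupp.single_apply, if_pos rfl]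
              omega
            · have : Phi ω ν = ω e + Phi ω ρ := by
                rw [← hadd, hμe, Phi_add, Phi_single]
              linarith
          | succ m' =>
            left
            have hΦμ : 1 ≤ Phi ω μ := by
              rw [hstep] at hμ
              exact Phi_lieDIter_mono hω1 hΦrhs (hΦrhs e) m' μ hμ
            have : Phi ω ν = Phi ω μ + Phi ω ρ := by rw [← hadd, Phi_add]
            linarith
  have hγ : ∀ m, coeff (Finsupp.single sL1 1 + Mf) (lieDIter (c.rhs k) m (X e * X sL1)) =
      coeff Mf (lieDIter (c.rhs k) m (X e)) := by
    intro m
    obtain ⟨R, hR, hG⟩ := hP m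
    have hR0 : coeff (Finsupp.single sL1 1 + Mf) R = 0 := by
      by_contra hc
      exact hGood_excl (hG _ hc)
    rw [hR, coeff_add, hR0, add_zero, add_comm (Finsupp.single sL1 1) Mf, coeff_mul_X]
  -- the u-recursion
  have hβ0 : coeff (Finsupp.single sL1 1 + Mf) (lieDIter (c.rhs k) 0 (X u)) = 0 :=
    hsingle_ne u husL1
  have hβsucc : ∀ q, coeff (Finsupp.single sL1 1 + Mf) (lieDIter (c.rhs k) (q + 1) (X u)) =
      k n (c.L n) 0 * coeff Mf (lieDIter (c.rhs k) q (X e))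
        + (-(k n (c.L n) 1 + k n (c.L n) 2)) *
          coeff (Finsupp.single sL1 1 + Mf) (lieDIter (c.rhs k) q (X u)) := by
    intro q
    rw [hstep, show c.rhs k u = C (k n (c.L n) 0) * (X e * X sL1)
        + C (-(k n (c.L n) 1 + k n (c.L n) 2)) * X u from c.rhs_U_gen k hn1 hnN hL le_rfl,
      lieDIter_add, lieDIter_C_mul, lieDIter_C_mul, coeff_add, coeff_C_mul, coeff_C_mul, hγ]
  -- vanishing of the side chains
  have hVan_fs : ∀ ℓ, coeff (Finsupp.single sL1 1 + Mf)
      (lieDIter (c.rhs k) ℓ (X (c.F n) * X s)) = 0 :=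
    hVan2 _ (hprod2 _ _ hωf hωs)
  have hVan_v : ∀ ℓ, coeff (Finsupp.single sL1 1 + Mf)
      (lieDIter (c.rhs k) ℓ (X (c.V n (c.L n)))) = 0 := by
    intro ℓ
    induction ℓ with
    | zero => exact hsingle_ne _ hvsL1
    | succ q ihq =>
      rw [hstep, c.rhs_V_closed k hn1 hnN, lieDIter_add, lieDIter_C_mul, lieDIter_C_mul,
        coeff_add, coeff_C_mul, coeff_C_mul, ihq, hVan_fs q]
      ring
  -- the s-recursion
  have hα0 : coeff (Finsupp.single sL1 1 + Mf) (lieDIter (c.rhs k) 0 (X s)) = 0 :=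
    hsingle_ne s hssL1
  have hαsucc : ∀ ℓ, coeff (Finsupp.single sL1 1 + Mf) (lieDIter (c.rhs k) (ℓ + 1) (X s)) =
      k n (c.L n) 2 * coeff (Finsupp.single sL1 1 + Mf) (lieDIter (c.rhs k) ℓ (X u)) := by
    intro ℓ
    rw [hstep, c.rhs_S_closed k hn1 hnN, lieDIter_add, coeff_add, lieDIter_C_mul, coeff_C_mul]
    have hrest : coeff (Finsupp.single sL1 1 + Mf) (lieDIter (c.rhs k) ℓ
        (C (-(k n (c.L n) 3)) * (X (c.F n) * X s) + C (k n (c.L n) 4) * X (c.V n (c.L n))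
          + (if n + 1 ≤ c.N then
              ∑ j ∈ Finset.Icc 1 (c.L (n + 1)),
                (C (-(k (n + 1) j 0)) * (X s * X (c.S (n + 1) (j - 1)))
                  + C (k (n + 1) j 1 + k (n + 1) j 2) * X (c.U (n + 1) j))
            else 0))) = 0 := by
      rw [lieDIter_add, lieDIter_add, lieDIter_C_mul, lieDIter_C_mul, coeff_add, coeff_add,
        coeff_C_mul, coeff_C_mul, hVan_fs, hVan_v]
      by_cases hN1 : n + 1 ≤ c.N
      · rw [if_pos hN1, lieDIter_sum, coeff_sum]
        have hjz : ∀ j ∈ Finset.Icc 1 (c.L (n + 1)), coeff (Finsupp.single sL1 1 + Mf)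
            (lieDIter (c.rhs k) ℓ (C (-(k (n + 1) j 0)) * (X s * X (c.S (n + 1) (j - 1)))
              + C (k (n + 1) j 1 + k (n + 1) j 2) * X (c.U (n + 1) j))) = 0 := by
          intro j hj
          rw [Finset.mem_Icc] at hj
          have hωS' : ω (c.S (n + 1) (j - 1)) = 1 := by
            refine hωdef _ ?_ ?_
            · rintro ⟨jj, hjj⟩
              exact c.lowVar_ne_S hn1 hnN (hvars jj) (by omega) hN1 (by omega) hjj
            · intro hEq
              have := c.hSinj (n + 1) (j - 1) n (c.L n - 1) (by omega) hN1 (by omega)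
                hn1 hnN (by omega) hEq
              omega
          have hU'sL1 : c.U (n + 1) j ≠ sL1 :=
            (c.hSU n (c.L n - 1) (n + 1) j hn1 hnN (by omega) (by omega) hN1 hj.1 hj.2).symm
          have hact : c.act (n + 1 - 1) = s := by
            rw [Nat.add_sub_cancel, hsdef, Cascade.act, if_neg (by omega)]
          have hVan_u' : ∀ ℓ', coeff (Finsupp.single sL1 1 + Mf)
              (lieDIter (c.rhs k) ℓ' (X (c.U (n + 1) j))) = 0 := by
            intro ℓ'
            induction ℓ' with
            | zero => exact hsingle_ne _ hU'sL1
            | succ q ihq =>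
              rw [hstep, c.rhs_U_gen k (by omega : 1 ≤ n + 1) hN1 hj.1 hj.2, hact,
                lieDIter_add, lieDIter_C_mul, lieDIter_C_mul, coeff_add, coeff_C_mul,
                coeff_C_mul, ihq, hVan2 _ (hprod2 _ _ hωs hωS') q]
              ring
          rw [lieDIter_add, lieDIter_C_mul, lieDIter_C_mul, coeff_add, coeff_C_mul,
            coeff_C_mul, hVan_u', hVan2 _ (hprod2 _ _ hωs hωS') ℓ]
          ring
        rw [Finset.sum_eq_zero hjz]
        ring
      · rw [if_neg hN1, lieDIter_zero_poly]
        simp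
    rw [hrest, add_zero]
  -- assemble
  have hβle : ∀ q, q ≤ ℓ₀ →
      coeff (Finsupp.single sL1 1 + Mf) (lieDIter (c.rhs k) q (X u)) = 0 := by
    intro q
    induction q with
    | zero => exact fun _ => hβ0
    | succ q ihq =>
      intro hq
      rw [hβsucc q, ihq (by omega), mul_zero, add_zero]
      have hε : coeff Mf (lieDIter (c.rhs k) q (X e)) = 0 := hmin q (by omega)
      rw [hε, mul_zero]
  have hβtop : coeff (Finsupp.single sL1 1 + Mf) (lieDIter (c.rhs k) (ℓ₀ + 1) (X u)) =
      k n (c.L n) 0 * coeff Mf (lieDIter (c.rhs k) ℓ₀ (X e)) := by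
    rw [hβsucc ℓ₀, hβle ℓ₀ le_rfl, mul_zero, add_zero]
  have hmain : coeff (Finsupp.single sL1 1 + Mf) (lieDIter (c.rhs k) (ℓ₀ + 2) (X s)) =
      k n (c.L n) 2 * k n (c.L n) 0 * coeff Mf (lieDIter (c.rhs k) ℓ₀ (X e)) := by
    rw [show ℓ₀ + 2 = (ℓ₀ + 1) + 1 from rfl, hαsucc (ℓ₀ + 1), hβtop]
    ring
  refine ⟨?_, ?_, ?_⟩
  · rw [show c.deriv k (ℓ₀ + 2) s = lieDIter (c.rhs k) (ℓ₀ + 2) (X s) from rfl, hmain]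
    have h2 := hk n (c.L n) hn1 hnN hL le_rfl 2
    have h0 := hk n (c.L n) hn1 hnN hL le_rfl 0
    exact mul_ne_zero (mul_ne_zero (ne_of_gt h2) (ne_of_gt h0)) happ
  · exact hmain
  · intro ℓ hℓ
    rw [show c.deriv k ℓ s = lieDIter (c.rhs k) ℓ (X s) from rfl]
    cases ℓ with
    | zero => exact hα0
    | succ q =>
      rw [hαsucc q, hβle q (by omega), mul_zero]


end Cascade
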